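/- arXiv:1612.01307 — 3 statements merged into one kernel-verified Lean document; each statement's English description precedes it below -/
import Mathlib

section
/- Let 1 ≤ k ≤ n−1 be integers. Then d_{n,k} ≥ κ_n² / (4ⁿ · δ_L(Bⁿ)). -/
open scoped Pointwise
open MeasureTheory RealInnerProductSpace

noncomputable section

/-- Euclidean `n`-space. -/
abbrev Euc (n : ℕ) : Type := EuclideanSpace ℝ (Fin n)

/-- The (full-rank, when `b` is linearly independent) lattice generated by `b`. -/
def latticeOf {n : ℕ} (b : Fin n → Euc n) : Set (Euc n) :=
  { x | ∃ c : Fin n → ℤ, x = ∑ i, (c i : ℝ) • b i }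

/-- Covolume (absolute determinant) of the lattice generated by `b`. -/
def covol {n : ℕ} (b : Fin n → Euc n) : ℝ :=
  |Matrix.det (Matrix.of fun i j => b i j)|

/-- A convex body: convex, compact, with nonempty interior. -/
def IsConvexBody {n : ℕ} (K : Set (Euc n)) : Prop :=
  Convex ℝ K ∧ IsCompact K ∧ (interior K).Nonempty

/-- The lattice `L` of translates of `K` is `k`-impassable: every `k`-dimensional affine
subspace of `ℝⁿ` meets some translate `x + K`, `x ∈ L`. -/
def IsImpassable {n : ℕ} (k : ℕ) (K L : Set (Euc n)) : Prop :=
  ∀ (W : Submodule ℝ (Euc n)) (v : Euc n), Module.finrank ℝ W = k →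
    ∃ x ∈ L, ((v +ᵥ (W : Set (Euc n))) ∩ (x +ᵥ K)).Nonempty

/-- `d_{n,k}(K)`: the infimum of densities of `k`-impassable lattices of translates of `K`. -/
def dImp (n k : ℕ) (K : Set (Euc n)) : ℝ :=
  sInf { d : ℝ | ∃ b : Fin n → Euc n, LinearIndependent ℝ b ∧
    IsImpassable k K (latticeOf b) ∧ d = (volume K).toReal / covol b }

/-- The closed unit ball `Bⁿ`. -/
def unitBall (n : ℕ) : Set (Euc n) := Metric.closedBall 0 1

/-- `κ_n`, the volume of the unit ball. -/
def ballVol (n : ℕ) : ℝ := (volume (unitBall n)).toReal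

/-- `d_{n,k} = d_{n,k}(Bⁿ)`. -/
def dImpBall (n k : ℕ) : ℝ := dImp n k (unitBall n)

/-- The lattice generated by `b` gives a lattice packing of translates of `K`. -/
def IsLatticePacking {n : ℕ} (K : Set (Euc n)) (b : Fin n → Euc n) : Prop :=
  LinearIndependent ℝ b ∧
    (latticeOf b).Pairwise fun x y => Disjoint (interior (x +ᵥ K)) (interior (y +ᵥ K))

/-- `δ_L(K)`: density of the densest lattice packing by translates of `K`. -/
def packingDensity (n : ℕ) (K : Set (Euc n)) : ℝ :=
  sSup { d : ℝ | ∃ b : Fin n → Euc n, IsLatticePacking K b ∧ d = (volume K).toReal / covol b }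

/-- `ϑ_L(Bᵐ)`: density of the thinnest lattice covering of `ℝᵐ` by unit balls. -/
def coveringDensityBall (m : ℕ) : ℝ :=
  sInf { d : ℝ | ∃ b : Fin m → Euc m, LinearIndependent ℝ b ∧
    (⋃ x ∈ latticeOf b, x +ᵥ unitBall m) = Set.univ ∧ d = ballVol m / covol b }

/-- The `k`-dimensional covolume of the sublattice spanned by `c` (square root of the
Gram determinant). -/
def subCovol {n k : ℕ} (c : Fin k → Euc n) : ℝ :=
  Real.sqrt |Matrix.det (Matrix.of fun i j => (⟪c i, c j⟫ : ℝ))|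

/-- `D_k(L)`: minimum of the `k`-dimensional covolumes of `k`-dimensional sublattices
of the lattice generated by `b`. -/
def Dk (n k : ℕ) (b : Fin n → Euc n) : ℝ :=
  sInf { d : ℝ | ∃ c : Fin k → Euc n, LinearIndependent ℝ c ∧
    (∀ i, c i ∈ latticeOf b) ∧ d = subCovol c }

/-- `c_{n,k}`: least constant `c > 0` with `D_k(L) ≤ c · D(L)^{k/n}` for all full-rank `L`. -/
def cConst (n k : ℕ) : ℝ :=
  sInf { c : ℝ | 0 < c ∧ ∀ b : Fin n → Euc n, LinearIndependent ℝ b →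
    Dk n k b ≤ c * covol b ^ ((k : ℝ) / (n : ℝ)) }

/-- A zonotope: a finite Minkowski sum of segments. -/
def IsZonotope {n : ℕ} (K : Set (Euc n)) : Prop :=
  ∃ (m : ℕ) (a c : Fin m → Euc n), K = ∑ i : Fin m, segment ℝ (a i) (c i)

/-- A zonoid: a convex body that is a Hausdorff limit of zonotopes. -/
def IsZonoid {n : ℕ} (K : Set (Euc n)) : Prop :=
  IsConvexBody K ∧ ∃ Z : ℕ → Set (Euc n), (∀ j, IsZonotope (Z j)) ∧
    Filter.Tendsto (fun j => Metric.hausdorffDist (Z j) K) Filter.atTop (nhds 0)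

/-- The polar body `K* = {y | ⟨x,y⟩ ≤ 1 for all x ∈ K}`. -/
def polarBody {n : ℕ} (K : Set (Euc n)) : Set (Euc n) :=
  { y | ∀ x ∈ K, (⟪x, y⟫ : ℝ) ≤ 1 }

/-- A cross-polytope: a bijective affine image of `conv{±e₁, …, ±e_n}`. -/
def IsCrossPolytope {n : ℕ} (K : Set (Euc n)) : Prop :=
  ∃ f : Euc n →ᵃ[ℝ] Euc n, Function.Bijective f ∧
    K = f '' convexHull ℝ
      (⋃ i : Fin n, ({EuclideanSpace.single i (1 : ℝ),
        -EuclideanSpace.single i (1 : ℝ)} : Set (Euc n)))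

/-- Symmetry with respect to all coordinate hyperplanes. -/
def SymmCoordHyperplanes {n : ℕ} (K : Set (Euc n)) : Prop :=
  ∀ x ∈ K, ∀ ε : Fin n → ℝ, (∀ i, ε i = 1 ∨ ε i = -1) →
    (show Euc n from WithLp.toLp 2 fun i => ε i * x i) ∈ K

/-- The central symmetral `(K - K)/2`. -/
def halfDiff {n : ℕ} (K : Set (Euc n)) : Set (Euc n) := (2⁻¹ : ℝ) • (K - K)

/-- A line through `v` with direction `d`. -/
def lineThrough {n : ℕ} (v d : Euc n) : Set (Euc n) := { p | ∃ t : ℝ, p = v + t • d }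

/-- The open infinite circular cylinder of radius `r` around the line through `v`
with direction `d`: points at distance `< r` from the line. -/
def openCylinder {n : ℕ} (v d : Euc n) (r : ℝ) : Set (Euc n) :=
  { p | Metric.infDist p (lineThrough v d) < r }

lemma ballVol_pos (n : ℕ) : 0 < ballVol n := by
  have h1 : volume (unitBall n) ≠ ⊤ := (isCompact_closedBall _ _).measure_lt_top.ne
  have h2 : 0 < volume (unitBall n) :=
    lt_of_lt_of_le (Metric.measure_ball_pos volume (0:Euc n) one_pos)
      (measure_mono Metric.ball_subset_closedBall)
  exact ENNReal.toReal_pos h2.ne' h1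

lemma isUnit_of_li {n : ℕ} {b : Fin n → Euc n} (hb : LinearIndependent ℝ b) :
    IsUnit (Matrix.of fun i j => b i j) := by
  rw [← Matrix.linearIndependent_rows_iff_isUnit]
  exact hb.map' (WithLp.linearEquiv 2 ℝ (Fin n → ℝ)).toLinearMap (LinearEquiv.ker _)

lemma covol_pos {n : ℕ} {b : Fin n → Euc n} (hb : LinearIndependent ℝ b) : 0 < covol b :=
  abs_pos.2 (((Matrix.isUnit_iff_isUnit_det _).1 (isUnit_of_li hb)).ne_zero)

lemma half_le_abs (m : ℤ) : (1:ℝ)/2 ≤ |1/2 - (m:ℝ)| := by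
  rcases le_or_gt (m:ℝ) 0 with h | h
  · rw [abs_of_nonneg (by linarith)]; linarith
  · have : (1:ℝ) ≤ m := by exact_mod_cast h
    rw [abs_of_nonpos (by linarith)]; linarith

lemma eucl_sum_apply {n : ℕ} (f : Fin n → Euc n) (j : Fin n) :
    (∑ i, f i) j = ∑ i, f i j := by
  rw [WithLp.ofLp_sum]; exact Finset.sum_apply j Finset.univ (fun i => (f i).ofLp)

lemma dual_norm_bound {n k : ℕ} (hk : 1 ≤ k) (hkn : k ≤ n - 1)
    {b u : Fin n → Euc n}
    (hpair : ∀ i j, (⟪u i, b j⟫ : ℝ) = if i = j then (1:ℝ) else 0)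
    (himp : IsImpassable k (unitBall n) (latticeOf b))
    {w : Euc n} (hw : w ∈ latticeOf u) (hw0 : w ≠ 0) : 1/2 ≤ ‖w‖ := by
  obtain ⟨mw, hweq⟩ := hw
  have hnw : ‖w‖ ≠ 0 := norm_ne_zero_iff.2 hw0
  -- a k-dimensional subspace of the hyperplane orthogonal to w
  set V : Submodule ℝ (Euc n) := (ℝ ∙ w)ᗮ with hVdef
  have hfr : Module.finrank ℝ (ℝ ∙ w) + Module.finrank ℝ V = n := by
    rw [Submodule.finrank_add_finrank_orthogonal]; exact finrank_euclideanSpace_fin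
  rw [finrank_span_singleton hw0] at hfr
  have hkV : k ≤ Module.finrank ℝ V := by omega
  set B := Module.finBasis ℝ V with hB
  set f : Fin k → Euc n := fun i => (B (Fin.castLE hkV i) : Euc n) with hf
  have hfli : LinearIndependent ℝ f := by
    have h1 : LinearIndependent ℝ (fun i : Fin (Module.finrank ℝ V) => ((B i : Euc n))) :=
      B.linearIndependent.map' V.subtype (Submodule.ker_subtype V)
    exact h1.comp (Fin.castLE hkV) (Fin.castLE_injective hkV)
  set W : Submodule ℝ (Euc n) := Submodule.span ℝ (Set.range f) with hW
  have hWr : Module.finrank ℝ W = k := by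
    rw [hW, finrank_span_eq_card hfli, Fintype.card_fin]
  have hWV : W ≤ V := Submodule.span_le.2 (by rintro _ ⟨i, rfl⟩; exact SetLike.coe_mem _)
  set v : Euc n := (2 * ‖w‖^2)⁻¹ • w with hv
  obtain ⟨x, hxL, p, hp⟩ := himp W v hWr
  obtain ⟨y, hyW, hyp⟩ := hp.1
  -- ⟪w, p⟫ = 1/2
  have hwy : (⟪w, y⟫ : ℝ) = 0 := (Submodule.mem_orthogonal _ y).1 (hWV hyW) w
    (Submodule.mem_span_singleton_self w)
  have hwp : (⟪w, p⟫ : ℝ) = 1/2 := by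
    rw [← hyp]
    show (⟪w, v + y⟫ : ℝ) = 1/2
    rw [inner_add_right, hwy, add_zero, hv, real_inner_smul_right,
      real_inner_self_eq_norm_sq]
    field_simp
  -- ⟪w, x⟫ is an integer
  obtain ⟨cx, hxeq⟩ := hxL
  have hux : ∀ j, (⟪u j, x⟫ : ℝ) = cx j := by
    intro j
    rw [hxeq, inner_sum]
    simp only [real_inner_smul_right, hpair]
    simp
  have hwx : (⟪w, x⟫ : ℝ) = ((∑ j, mw j * cx j : ℤ) : ℝ) := by
    rw [hweq, sum_inner]
    push_cast
    exact Finset.sum_congr rfl fun j _ => by rw [real_inner_smul_left, hux]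
  -- ‖p - x‖ ≤ 1
  obtain ⟨q, hq, hqe⟩ := hp.2
  have hpx : ‖p - x‖ ≤ 1 := by
    have : p - x = q := by rw [← hqe]; show x + q - x = q; abel
    rw [this]; exact mem_closedBall_zero_iff.1 hq
  have h1 : |(⟪w, p - x⟫ : ℝ)| ≤ ‖w‖ := by
    calc |(⟪w, p - x⟫ : ℝ)| ≤ ‖w‖ * ‖p - x‖ := abs_real_inner_le_norm w (p - x)
    _ ≤ ‖w‖ * 1 := mul_le_mul_of_nonneg_left hpx (norm_nonneg w)
    _ = ‖w‖ := mul_one _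
  have h2 : (⟪w, p - x⟫ : ℝ) = 1/2 - ((∑ j, mw j * cx j : ℤ) : ℝ) := by
    rw [inner_sub_right, hwp, hwx]
  calc (1:ℝ)/2 ≤ |1/2 - ((∑ j, mw j * cx j : ℤ) : ℝ)| := half_le_abs _
  _ ≤ ‖w‖ := by rw [← h2]; exact h1

lemma exists_impassable (n k : ℕ) (hn : 1 ≤ n) :
    ∃ b : Fin n → Euc n, LinearIndependent ℝ b ∧
      IsImpassable k (unitBall n) (latticeOf b) := by
  have hn0 : ((n:ℝ)) ≠ 0 := Nat.cast_ne_zero.2 (by omega)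
  set b : Fin n → Euc n := fun i => ((n:ℝ)⁻¹) • EuclideanSpace.single i 1 with hbdef
  have hbapp : ∀ i j, b i j = (n:ℝ)⁻¹ * (if j = i then 1 else 0) := by
    intro i j
    show ((n:ℝ)⁻¹ • EuclideanSpace.single i (1:ℝ)) j = _
    rw [PiLp.smul_apply, EuclideanSpace.single_apply]
    simp
  refine ⟨b, ?_, ?_⟩
  · rw [Fintype.linearIndependent_iff]
    intro g h j
    have h2 := congrArg (fun z : Euc n => z j) h
    simp only [eucl_sum_apply] at h2
    have h3 : ∀ i, (g i • b i) j = g i * ((n:ℝ)⁻¹ * if j = i then 1 else 0) := by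
      intro i; rw [PiLp.smul_apply, hbapp]; simp
    simp only [h3] at h2
    simp only [mul_ite, mul_one, mul_zero, Finset.sum_ite_eq, Finset.mem_univ,
      if_true, Pi.zero_apply] at h2
    have : g j * (n:ℝ)⁻¹ = 0 := h2
    rcases mul_eq_zero.1 this with h | h
    · exact h
    · exact absurd h (inv_ne_zero hn0)
  · intro W v hWr
    set c : Fin n → ℤ := fun i => round ((n:ℝ) * v i) with hc
    set x : Euc n := ∑ i, (c i : ℝ) • b i with hx
    refine ⟨x, ⟨c, rfl⟩, v, ?_, ?_⟩
    · exact ⟨0, W.zero_mem, by simp⟩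
    · rw [Set.mem_vadd_set]
      refine ⟨v - x, ?_, by show x + (v - x) = v; abel⟩
      show v - x ∈ Metric.closedBall 0 1
      rw [mem_closedBall_zero_iff]
      have hxj : ∀ j, x j = (c j : ℝ) * (n:ℝ)⁻¹ := by
        intro j
        rw [hx, eucl_sum_apply]
        have h3 : ∀ i, ((c i : ℝ) • b i) j = (c i : ℝ) * ((n:ℝ)⁻¹ * if j = i then 1 else 0) := by
          intro i; rw [PiLp.smul_apply, hbapp]; simp
        simp only [h3, mul_ite, mul_one, mul_zero, Finset.sum_ite_eq, Finset.mem_univ, if_true]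
      have hcoord : ∀ j, ‖(v - x) j‖ ^ 2 ≤ ((2 * n : ℝ)⁻¹) ^ 2 := by
        intro j
        have h4 : (v - x) j = v j - (c j : ℝ) * (n:ℝ)⁻¹ := by
          rw [PiLp.sub_apply, hxj]
        have h5 : |v j - (c j : ℝ) * (n:ℝ)⁻¹| ≤ (2 * n : ℝ)⁻¹ := by
          have h6 : v j - (c j : ℝ) * (n:ℝ)⁻¹ = ((n:ℝ) * v j - round ((n:ℝ) * v j)) / n := by
            rw [eq_div_iff hn0]; push_cast [hc]; field_simp
          rw [h6, abs_div, abs_of_nonneg (by positivity : (0:ℝ) ≤ (n:ℝ)),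
            div_le_iff₀ (by positivity)]
          calc |(n:ℝ) * v j - ↑(round ((n:ℝ) * v j))| ≤ 1/2 := abs_sub_round _
          _ = (2 * (n:ℝ))⁻¹ * n := by field_simp
        rw [h4]
        calc ‖v j - (c j : ℝ) * (n:ℝ)⁻¹‖ ^ 2 = |v j - (c j : ℝ) * (n:ℝ)⁻¹| ^ 2 := by
              rw [Real.norm_eq_abs]
        _ ≤ ((2 * n : ℝ)⁻¹) ^ 2 := by
              have := h5; nlinarith [abs_nonneg (v j - (c j : ℝ) * (n:ℝ)⁻¹)]
      rw [EuclideanSpace.norm_eq]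
      refine Real.sqrt_le_one.2 ?_
      calc ∑ j, ‖(v - x) j‖ ^ 2 ≤ ∑ _j : Fin n, ((2 * n : ℝ)⁻¹) ^ 2 :=
            Finset.sum_le_sum fun j _ => hcoord j
      _ = n * ((2 * n : ℝ)⁻¹) ^ 2 := by rw [Finset.sum_const, Finset.card_univ,
            Fintype.card_fin, nsmul_eq_mul]
      _ ≤ 1 := by
            rw [mul_inv, mul_pow]
            have h7 : (1:ℝ) ≤ (n:ℝ) := by exact_mod_cast hn
            have h8 : (0:ℝ) < (n:ℝ) := by linarith
            calc (n:ℝ) * ((2:ℝ)⁻¹ ^ 2 * ((n:ℝ)⁻¹) ^ 2) = (4:ℝ)⁻¹ * (n:ℝ)⁻¹ := by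
                  field_simp; ring
            _ ≤ 1 := by
                  have : (n:ℝ)⁻¹ ≤ 1 := by rw [inv_le_one_iff₀]; right; exact h7
                  nlinarith

lemma inner_eucl {n : ℕ} (x y : Euc n) : (⟪x, y⟫ : ℝ) = ∑ i, x i * y i := by
  simp [PiLp.inner_apply, RCLike.inner_apply, conj_trivial, mul_comm]

lemma exists_dual {n : ℕ} {b : Fin n → Euc n} (hb : LinearIndependent ℝ b) :
    ∃ u : Fin n → Euc n, (∀ i j, (⟪u i, b j⟫:ℝ) = if i = j then 1 else 0) ∧
      covol u = (covol b)⁻¹ := by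
  set M : Matrix (Fin n) (Fin n) ℝ := Matrix.of fun i j => b i j with hM
  have hdet : IsUnit M.det := (Matrix.isUnit_iff_isUnit_det _).1 (isUnit_of_li hb)
  refine ⟨fun i => (show Euc n from WithLp.toLp 2 fun j => M⁻¹ j i), ?_, ?_⟩
  · intro i j
    rw [inner_eucl]
    have h1 : (M * M⁻¹) j i = ∑ t, M j t * M⁻¹ t i := Matrix.mul_apply
    have h2 : (M * M⁻¹) j i = if j = i then 1 else 0 := by
      rw [Matrix.mul_nonsing_inv M hdet, Matrix.one_apply]
    rw [show (∑ t, (show Euc n from WithLp.toLp 2 fun j' => M⁻¹ j' i) t * b j t) = ∑ t, M j t * M⁻¹ t i from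
      Finset.sum_congr rfl fun t _ => mul_comm _ _, ← h1, h2]
    simp [eq_comm]
  · show |Matrix.det (Matrix.of fun i j => M⁻¹ j i)| = _
    have h3 : (Matrix.of fun i j => M⁻¹ j i) = Matrix.transpose M⁻¹ := by
      ext i j; rfl
    rw [h3, Matrix.det_transpose, Matrix.det_nonsing_inv, Ring.inverse_eq_inv, abs_inv]
    rfl

lemma li_of_pairing {n : ℕ} {u b : Fin n → Euc n}
    (hpair : ∀ i j, (⟪u i, b j⟫:ℝ) = if i = j then 1 else 0) : LinearIndependent ℝ u := by
  rw [Fintype.linearIndependent_iff]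
  intro g h j
  have h2 := congrArg (fun z : Euc n => (⟪z, b j⟫ : ℝ)) h
  simp only [sum_inner, real_inner_smul_left, hpair, inner_zero_left, mul_ite, mul_one,
    mul_zero, Finset.sum_ite_eq', Finset.mem_univ, if_true] at h2
  exact h2

lemma covol_smul {n : ℕ} (t : ℝ) (u : Fin n → Euc n) :
    covol (fun i => t • u i) = |t|^n * covol u := by
  show |Matrix.det (Matrix.of fun i j => (t • u i) j)| = _
  have h : (Matrix.of fun i j => (t • u i) j) = t • (Matrix.of fun i j => u i j) := by
    ext i j
    show (t • u i) j = t * u i j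
    rw [PiLp.smul_apply, smul_eq_mul]
  rw [h, Matrix.det_smul, abs_mul, abs_pow, Fintype.card_fin]
  rfl

lemma packing_of_dual {n k : ℕ} (hk : 1 ≤ k) (hkn : k ≤ n - 1)
    {b u : Fin n → Euc n}
    (hpair : ∀ i j, (⟪u i, b j⟫:ℝ) = if i = j then 1 else 0)
    (himp : IsImpassable k (unitBall n) (latticeOf b)) :
    IsLatticePacking (unitBall n) (fun i => (4:ℝ) • u i) := by
  have hball : ∀ z : Euc n, z +ᵥ unitBall n = Metric.closedBall z 1 := by
    intro z
    show z +ᵥ Metric.closedBall (0:Euc n) 1 = _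
    rw [Metric.vadd_closedBall]; simp
  constructor
  · refine li_of_pairing (b := fun j => (4:ℝ)⁻¹ • b j) ?_
    intro i j
    rw [real_inner_smul_left, real_inner_smul_right, hpair]
    norm_num
  · intro x hx y hy hxy
    obtain ⟨cx, hxe⟩ := hx
    obtain ⟨cy, hye⟩ := hy
    set w : Euc n := ∑ i, ((cx i - cy i : ℤ) : ℝ) • u i with hwdef
    have hwlat : w ∈ latticeOf u := ⟨_, rfl⟩
    have hdiff : x - y = (4:ℝ) • w := by
      rw [hxe, hye, hwdef, Finset.smul_sum, ← Finset.sum_sub_distrib]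
      refine Finset.sum_congr rfl fun i _ => ?_
      push_cast
      module
    have hw0 : w ≠ 0 := by
      intro h
      apply hxy
      have h0 : x - y = 0 := by rw [hdiff, h, smul_zero]
      exact sub_eq_zero.1 h0
    have hnorm : 2 ≤ dist x y := by
      rw [dist_eq_norm, hdiff, norm_smul, Real.norm_eq_abs]
      have h12 := dual_norm_bound hk hkn hpair himp hwlat hw0
      rw [abs_of_nonneg (by norm_num : (0:ℝ) ≤ 4)]
      linarith
    rw [hball, hball, interior_closedBall _ one_ne_zero, interior_closedBall _ one_ne_zero]
    exact Metric.ball_disjoint_ball (by linarith)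


/-- For `1 ≤ k ≤ n-1`, `d_{n,k} ≥ κ_n² / (4ⁿ · δ_L(Bⁿ))`. -/
theorem stmt_5 (n k : ℕ) (hk : 1 ≤ k) (hkn : k ≤ n - 1) :
    dImpBall n k ≥ ballVol n ^ 2 / (4 ^ n * packingDensity n (unitBall n)) := by

  have hn2 : 2 ≤ n := by omega
  set δ := packingDensity n (unitBall n) with hδdef
  have hκ := ballVol_pos n
  rcases le_or_gt δ 0 with hδ0 | hδ0
  · have hL : 0 ≤ dImpBall n k := by
      refine Real.sInf_nonneg fun d hd => ?_
      obtain ⟨b, hb, _, rfl⟩ := hd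
      exact div_nonneg ENNReal.toReal_nonneg (abs_nonneg _)
    have h4 : (0:ℝ) < 4 ^ n := by positivity
    have hR : ballVol n ^ 2 / (4 ^ n * δ) ≤ 0 := by
      apply div_nonpos_of_nonneg_of_nonpos (sq_nonneg _)
      nlinarith
    linarith
  · have hbdd : BddAbove { d : ℝ | ∃ b : Fin n → Euc n, IsLatticePacking (unitBall n) b ∧
        d = (volume (unitBall n)).toReal / covol b } := by
      by_contra h
      have := Real.sSup_of_not_bddAbove h
      rw [hδdef, packingDensity] at hδ0
      rw [this] at hδ0
      exact lt_irrefl 0 hδ0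
    rw [ge_iff_le, dImpBall, dImp]
    refine le_csInf ?_ ?_
    · obtain ⟨b₀, hb₀, himp₀⟩ := exists_impassable n k (by omega)
      exact ⟨_, b₀, hb₀, himp₀, rfl⟩
    · rintro d ⟨b, hb, himp, rfl⟩
      obtain ⟨u, hpair, hcu⟩ := exists_dual hb
      have hpack := packing_of_dual hk hkn hpair himp
      have hD := covol_pos hb
      set D := covol b with hDdef
      have h4 : (0:ℝ) < 4 ^ n := by positivity
      have hcovolc : covol (fun i => (4:ℝ) • u i) = 4 ^ n * D⁻¹ := by
        rw [covol_smul, hcu, abs_of_nonneg (by norm_num : (0:ℝ) ≤ 4)]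
      have hmem : (volume (unitBall n)).toReal / covol (fun i => (4:ℝ) • u i) ∈
          { d : ℝ | ∃ b : Fin n → Euc n, IsLatticePacking (unitBall n) b ∧
            d = (volume (unitBall n)).toReal / covol b } := ⟨_, hpack, rfl⟩
      have hle : (volume (unitBall n)).toReal / covol (fun i => (4:ℝ) • u i) ≤ δ :=
        le_csSup hbdd hmem
      rw [hcovolc] at hle
      have hκv : (volume (unitBall n)).toReal = ballVol n := rfl
      rw [hκv] at hle ⊢
      have hle2 : ballVol n * D ≤ 4 ^ n * δ := by
        have heq : ballVol n / (4 ^ n * D⁻¹) = ballVol n * D / 4 ^ n := by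
          field_simp
        rw [heq, div_le_iff₀ h4] at hle
        linarith
      rw [div_le_div_iff₀ (by positivity) hD]
      nlinarith
end
end

section
/- d_{2,1} = √3 · π / 8; that is, the infimum of the densities of lattices of translates of the closed unit disc in ℝ² such that every line in ℝ² meets some disc of the lattice equals √3 π/8. -/
open scoped Pointwise
open MeasureTheory RealInnerProductSpace

noncomputable section

namespace S6


-- [PASTE of h1 helpers assumed here]

lemma mem_lat {b : Fin 2 → Euc 2} {x : Euc 2} :
    x ∈ latticeOf b ↔ ∃ m n : ℤ, x = (m:ℝ) • b 0 + (n:ℝ) • b 1 := by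
  constructor
  · rintro ⟨c, rfl⟩; exact ⟨c 0, c 1, by rw [Fin.sum_univ_two]⟩
  · rintro ⟨m, n, rfl⟩
    exact ⟨![m, n], by rw [Fin.sum_univ_two]; simp⟩

lemma covol_eq (b : Fin 2 → Euc 2) :
    covol b = |b 0 0 * b 1 1 - b 0 1 * b 1 0| := by
  rw [covol, Matrix.det_fin_two]; simp

lemma coord (b : Fin 2 → Euc 2) (m n : ℝ) (j : Fin 2) :
    ((m • b 0 + n • b 1 : Euc 2)) j = m * b 0 j + n * b 1 j := by simp

lemma li_coeffs {b : Fin 2 → Euc 2} (hb : LinearIndependent ℝ b) {m n : ℝ}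
    (h : m • b 0 + n • b 1 = 0) : m = 0 ∧ n = 0 := by
  rw [Fintype.linearIndependent_iff] at hb
  have := hb ![m, n] (by rw [Fin.sum_univ_two]; simpa using h)
  exact ⟨this 0, this 1⟩

lemma euc_ext {x y : Euc 2} (h0 : x 0 = y 0) (h1 : x 1 = y 1) : x = y := by
  apply PiLp.ext; intro j; fin_cases j <;> assumption

lemma det_ne_zero {b : Fin 2 → Euc 2} (hb : LinearIndependent ℝ b) :
    b 0 0 * b 1 1 - b 0 1 * b 1 0 ≠ 0 := by
  intro h
  have h1 := li_coeffs hb (m := b 1 1) (n := -(b 0 1))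
    (euc_ext (by rw [coord]; push_cast; simp; linarith) (by rw [coord]; simp; ring))
  have h2 := li_coeffs hb (m := b 1 0) (n := -(b 0 0))
    (euc_ext (by rw [coord]; simp; ring) (by rw [coord]; simp; nlinarith [h1.1, h1.2]))
  have hb1 : b 1 = 0 := euc_ext (by simpa using h2.1) (by simpa using h1.1)
  have := li_coeffs hb (m := (0:ℝ)) (n := 1) (by rw [hb1]; simp)
  exact one_ne_zero this.2

lemma normsq (x : Euc 2) : ‖x‖^2 = (x 0)^2 + (x 1)^2 := by
  rw [EuclideanSpace.norm_eq, Real.sq_sqrt (by positivity)]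
  simp [Fin.sum_univ_two, sq_abs]

lemma mem_ball_iff (x : Euc 2) : x ∈ unitBall 2 ↔ (x 0)^2 + (x 1)^2 ≤ 1 := by
  rw [unitBall, Metric.mem_closedBall, dist_zero_right]
  constructor
  · intro h
    have h2 : ‖x‖^2 ≤ 1 := by nlinarith [norm_nonneg x]
    rwa [normsq] at h2
  · intro h
    have h2 : ‖x‖^2 ≤ 1 := by rwa [normsq]
    nlinarith [norm_nonneg x]

def Nq (A B C D : ℝ) (m n : ℤ) : ℝ := ((m:ℝ)*A + n*C)^2 + ((m:ℝ)*B + n*D)^2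

lemma int_abs_le_sq (m : ℤ) : |m| ≤ m^2 := by
  have h0 : 0 ≤ |m| := abs_nonneg m
  have h : |m| = 0 ∨ 1 ≤ |m| := by omega
  have h2 : m^2 = |m|^2 := (sq_abs m).symm
  rcases h with h | h <;> nlinarith

lemma int_le_sq (m : ℤ) : m ≤ m^2 := le_trans (le_abs_self m) (int_abs_le_sq m)

lemma exists_shortest (A B C D : ℝ) (hΔ : A*D - B*C ≠ 0) :
    ∃ p q : ℤ, ¬(p = 0 ∧ q = 0) ∧ ∀ m n : ℤ, ¬(m = 0 ∧ n = 0) →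
      Nq A B C D p q ≤ Nq A B C D m n := by
  have hΔ2 : 0 < (A*D - B*C)^2 := by positivity
  set R := Nq A B C D 1 0 with hR
  set Bm : ℝ := R * (C^2 + D^2) / (A*D - B*C)^2 with hBm
  set Bn : ℝ := R * (A^2 + B^2) / (A*D - B*C)^2 with hBn
  set C0 : ℤ := max ⌈Bm⌉ ⌈Bn⌉ with hC0
  set T : Set (ℤ × ℤ) := {c | ¬(c.1 = 0 ∧ c.2 = 0) ∧ Nq A B C D c.1 c.2 ≤ R} with hT
  have key : ∀ m n : ℤ, Nq A B C D m n ≤ R → |m| ≤ C0 ∧ |n| ≤ C0 := by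
    intro m n hle
    have hx : ((m:ℝ)*A + n*C)^2 + ((m:ℝ)*B + n*D)^2 ≤ R := hle
    have hm : ((m:ℝ))^2 * (A*D - B*C)^2 ≤ R * (C^2 + D^2) := by
      have hid : ((m:ℝ))^2*(A*D - B*C)^2 =
          (((m:ℝ)*A + n*C)^2 + ((m:ℝ)*B + n*D)^2)*(C^2+D^2)
            - (((m:ℝ)*A + n*C)*C + ((m:ℝ)*B + n*D)*D)^2 := by ring
      have h2 := mul_le_mul_of_nonneg_right hx (by positivity : (0:ℝ) ≤ C^2+D^2)
      nlinarith [sq_nonneg (((m:ℝ)*A + n*C)*C + ((m:ℝ)*B + n*D)*D)]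
    have hn : ((n:ℝ))^2 * (A*D - B*C)^2 ≤ R * (A^2 + B^2) := by
      have hid : ((n:ℝ))^2*(A*D - B*C)^2 =
          (((m:ℝ)*A + n*C)^2 + ((m:ℝ)*B + n*D)^2)*(A^2+B^2)
            - (((m:ℝ)*A + n*C)*A + ((m:ℝ)*B + n*D)*B)^2 := by ring
      have h2 := mul_le_mul_of_nonneg_right hx (by positivity : (0:ℝ) ≤ A^2+B^2)
      nlinarith [sq_nonneg (((m:ℝ)*A + n*C)*A + ((m:ℝ)*B + n*D)*B)]
    have hm' : ((m:ℝ))^2 ≤ Bm := by rw [hBm, le_div_iff₀ hΔ2]; exact hm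
    have hn' : ((n:ℝ))^2 ≤ Bn := by rw [hBn, le_div_iff₀ hΔ2]; exact hn
    constructor
    · have c1 : ((|m| : ℤ):ℝ) ≤ ((m:ℝ))^2 := by exact_mod_cast int_abs_le_sq m
      have c2 : ((|m| : ℤ):ℝ) ≤ (⌈Bm⌉:ℝ) := le_trans (le_trans c1 hm') (Int.le_ceil Bm)
      exact le_trans (by exact_mod_cast c2) (le_max_left _ _)
    · have c1 : ((|n| : ℤ):ℝ) ≤ ((n:ℝ))^2 := by exact_mod_cast int_abs_le_sq n
      have c2 : ((|n| : ℤ):ℝ) ≤ (⌈Bn⌉:ℝ) := le_trans (le_trans c1 hn') (Int.le_ceil Bn)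
      exact le_trans (by exact_mod_cast c2) (le_max_right _ _)
  have hfin : T.Finite := by
    apply Set.Finite.subset (Set.finite_Icc (-C0, -C0) (C0, C0))
    rintro ⟨m, n⟩ ⟨-, hle⟩
    obtain ⟨h1, h2⟩ := key m n hle
    rw [abs_le] at h1 h2
    exact ⟨⟨h1.1, h2.1⟩, h1.2, h2.2⟩
  have hne : T.Nonempty := ⟨(1, 0), by simp [hT], le_refl R⟩
  obtain ⟨⟨p, q⟩, hpqT, hmin⟩ := Set.exists_min_image T (fun c => Nq A B C D c.1 c.2) hfin hne
  refine ⟨p, q, hpqT.1, fun m n hmn => ?_⟩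
  rcases le_or_gt (Nq A B C D m n) R with h | h
  · exact hmin (m, n) ⟨hmn, h⟩
  · exact le_trans hpqT.2 h.le


lemma cross_contra (Δ w0 w1 z0 z1 : ℝ) (n' : ℤ)
    (hzball : z0^2 + z1^2 ≤ 1)
    (hcross : z0*(-w1) + z1*w0 = Δ*(2⁻¹ - (n':ℝ)))
    (hcon : 4*(w0^2+w1^2) < Δ^2) : False := by
  have hCS : (z0*(-w1) + z1*w0)^2 ≤ (z0^2 + z1^2) * (w1^2 + w0^2) := by
    nlinarith [sq_nonneg (z0*w0 + z1*w1)]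
  have hn'sq : (1:ℝ)/4 ≤ (2⁻¹ - (n':ℝ))^2 := by
    have h1 : ((n':ℤ):ℝ) ≤ ((n':ℤ):ℝ)^2 := by exact_mod_cast int_le_sq n'
    nlinarith
  have hstep : (z0^2 + z1^2) * (w1^2 + w0^2) ≤ w1^2 + w0^2 := by
    nlinarith [sq_nonneg w0, sq_nonneg w1, sq_nonneg z0, sq_nonneg z1]
  have hlhs : Δ^2 * (1/4) ≤ (z0*(-w1) + z1*w0)^2 := by
    rw [hcross, mul_pow]
    nlinarith [sq_nonneg Δ, sq_nonneg (2⁻¹ - (n':ℝ))]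
  nlinarith

lemma hermite_bound (A B C D : ℝ) (p q : ℤ)
    (hpq0 : ¬(p = 0 ∧ q = 0))
    (hpos : ∀ m n : ℤ, ¬(m = 0 ∧ n = 0) → 0 < Nq A B C D m n)
    (hmin : ∀ m n : ℤ, ¬(m = 0 ∧ n = 0) → Nq A B C D p q ≤ Nq A B C D m n) :
    3 * (Nq A B C D p q)^2 ≤ 4 * (A*D - B*C)^2 := by
  have hQwpos : 0 < Nq A B C D p q := hpos p q hpq0
  -- primitivity
  have hg : Int.gcd p q = 1 := by
    by_contra hgne
    have hg0 : Int.gcd p q ≠ 0 := fun h => hpq0 (Int.gcd_eq_zero_iff.mp h)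
    have hg2 : (2:ℤ) ≤ (Int.gcd p q : ℤ) := by
      have : 1 ≤ Int.gcd p q := Nat.pos_of_ne_zero hg0
      omega
    obtain ⟨g, hgdef⟩ : ∃ g:ℤ, g = (Int.gcd p q : ℤ) := ⟨_, rfl⟩
    rw [← hgdef] at hg2
    obtain ⟨p', hp'⟩ : g ∣ p := hgdef ▸ (Int.gcd_dvd_left p q : (Int.gcd p q : ℤ) ∣ p)
    obtain ⟨q', hq'⟩ : g ∣ q := hgdef ▸ (Int.gcd_dvd_right p q : (Int.gcd p q : ℤ) ∣ q)
    have hpq'0 : ¬(p' = 0 ∧ q' = 0) := by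
      rintro ⟨rfl, rfl⟩
      simp at hp' hq'
      exact hpq0 ⟨hp', hq'⟩
    have hscale : Nq A B C D p q = ((g:ℤ):ℝ)^2 * Nq A B C D p' q' := by
      rw [Nq, Nq, hp', hq']; push_cast; ring
    have h1 := hmin p' q' hpq'0
    have h2 := hpos p' q' hpq'0
    have h3 : (2:ℝ) ≤ ((g:ℤ):ℝ) := by exact_mod_cast hg2
    have h4 : (4:ℝ) ≤ ((g:ℤ):ℝ)^2 := by nlinarith
    nlinarith [mul_le_mul_of_nonneg_right h4 h2.le]
  obtain ⟨ta, sb, hab⟩ := Int.isCoprime_iff_gcd_eq_one.mpr hg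
  obtain ⟨w0, hw0⟩ : ∃ r:ℝ, r = (p:ℝ)*A + q*C := ⟨_, rfl⟩
  obtain ⟨w1, hw1⟩ : ∃ r:ℝ, r = (p:ℝ)*B + q*D := ⟨_, rfl⟩
  have hQw : Nq A B C D p q = w0^2 + w1^2 := by rw [hw0, hw1]; rfl
  obtain ⟨J, hJ⟩ : ∃ r:ℝ, r = ((-sb:ℤ):ℝ)*A*w0 + (ta:ℝ)*C*w0 + ((-sb:ℤ):ℝ)*B*w1 + (ta:ℝ)*D*w1 :=
    ⟨_, rfl⟩
  obtain ⟨k, hk⟩ : ∃ k:ℤ, k = round (J / Nq A B C D p q) := ⟨_, rfl⟩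
  obtain ⟨s', hs'⟩ : ∃ s':ℤ, s' = -sb - k*p := ⟨_, rfl⟩
  obtain ⟨t', ht'⟩ : ∃ t':ℤ, t' = ta - k*q := ⟨_, rfl⟩
  have hdet1 : p * t' - q * s' = 1 := by rw [hs', ht']; linear_combination hab
  obtain ⟨u0, hu0⟩ : ∃ r:ℝ, r = (s':ℝ)*A + t'*C := ⟨_, rfl⟩
  obtain ⟨u1, hu1⟩ : ∃ r:ℝ, r = (s':ℝ)*B + t'*D := ⟨_, rfl⟩
  have hNqu : Nq A B C D s' t' = u0^2 + u1^2 := by rw [hu0, hu1]; rfl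
  obtain ⟨I, hI⟩ : ∃ r:ℝ, r = u0*w0 + u1*w1 := ⟨_, rfl⟩
  have hIJ : I = J - k*(w0^2 + w1^2) := by
    rw [hI, hJ, hu0, hu1, hs', ht', hw0, hw1]; push_cast; ring
  have hQ2pos : (0:ℝ) < w0^2 + w1^2 := by rw [← hQw]; exact hQwpos
  have hIbound : |I| ≤ (w0^2 + w1^2) / 2 := by
    have h1 : |J/(w0^2+w1^2) - (k:ℝ)| ≤ 1/2 := by
      rw [hk, hQw]; exact abs_sub_round _
    have h2 : I = (J/(w0^2+w1^2) - k) * (w0^2+w1^2) := by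
      rw [hIJ]; field_simp
    rw [h2, abs_mul, abs_of_pos hQ2pos]
    calc |J/(w0^2+w1^2) - (k:ℝ)| * (w0^2+w1^2) ≤ (1/2) * (w0^2+w1^2) :=
          mul_le_mul_of_nonneg_right h1 (by positivity)
      _ = (w0^2+w1^2) / 2 := by ring
  have hs't'0 : ¬(s' = 0 ∧ t' = 0) := by
    rintro ⟨h1, h2⟩
    rw [h1, h2] at hdet1; simp at hdet1
  have hQu : Nq A B C D p q ≤ u0^2 + u1^2 := by rw [← hNqu]; exact hmin s' t' hs't'0
  have hdet1r : (p:ℝ)*t' - q*s' = 1 := by exact_mod_cast hdet1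
  have hdetwu : w0*u1 - w1*u0 = A*D - B*C := by
    rw [hw0, hw1, hu0, hu1]
    linear_combination (A*D - B*C) * hdet1r
  have hgram : (A*D - B*C)^2 = (w0^2 + w1^2) * (u0^2 + u1^2) - I^2 := by
    rw [← hdetwu, hI]; ring
  have hI2 : I^2 ≤ ((w0^2+w1^2)/2)^2 := by
    have h := pow_le_pow_left₀ (abs_nonneg I) hIbound 2
    rwa [sq_abs] at h
  rw [hQw] at hQu ⊢
  have hmul : (w0^2+w1^2)*(w0^2+w1^2) ≤ (w0^2+w1^2)*(u0^2+u1^2) :=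
    mul_le_mul_of_nonneg_left hQu hQ2pos.le
  nlinarith [hmul, hI2, hgram]

lemma key_lower {b : Fin 2 → Euc 2} (hb : LinearIndependent ℝ b)
    (him : IsImpassable 1 (unitBall 2) (latticeOf b)) : covol b ≤ 8 / Real.sqrt 3 := by
  have hΔ : b 0 0 * b 1 1 - b 0 1 * b 1 0 ≠ 0 := det_ne_zero hb
  obtain ⟨p, q, hpq0, hmin⟩ := exists_shortest (b 0 0) (b 0 1) (b 1 0) (b 1 1) hΔ
  have hNq : ∀ m n : ℤ, Nq (b 0 0) (b 0 1) (b 1 0) (b 1 1) m n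
      = ‖((m:ℝ) • b 0 + (n:ℝ) • b 1 : Euc 2)‖^2 := by
    intro m n; rw [normsq, coord, coord, Nq]
  have hvec_ne : ∀ m n : ℤ, ¬(m = 0 ∧ n = 0) → ((m:ℝ) • b 0 + (n:ℝ) • b 1 : Euc 2) ≠ 0 := by
    intro m n hmn hzero
    obtain ⟨h1, h2⟩ := li_coeffs hb hzero
    exact hmn ⟨by exact_mod_cast h1, by exact_mod_cast h2⟩
  have hNqpos : ∀ m n : ℤ, ¬(m = 0 ∧ n = 0) → 0 < Nq (b 0 0) (b 0 1) (b 1 0) (b 1 1) m n := by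
    intro m n hmn
    rw [hNq]
    exact pow_pos (norm_pos_iff.mpr (hvec_ne m n hmn)) 2
  have hQwpos := hNqpos p q hpq0
  have hermite := hermite_bound (b 0 0) (b 0 1) (b 1 0) (b 1 1) p q hpq0 hNqpos hmin
  -- impassability bound
  have himp : (b 0 0 * b 1 1 - b 0 1 * b 1 0)^2
      ≤ 4 * Nq (b 0 0) (b 0 1) (b 1 0) (b 1 1) p q := by
    by_contra hcon
    push_neg at hcon
    have hwne : ((p:ℝ) • b 0 + (q:ℝ) • b 1 : Euc 2) ≠ 0 := hvec_ne p q hpq0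
    have hrank : Module.finrank ℝ
        (Submodule.span ℝ {((p:ℝ) • b 0 + (q:ℝ) • b 1 : Euc 2)}) = 1 :=
      finrank_span_singleton hwne
    have hQpos' : (0:ℝ) < ((p:ℝ)*b 0 0 + (q:ℝ)*b 1 0)^2 + ((p:ℝ)*b 0 1 + (q:ℝ)*b 1 1)^2 :=
      hNqpos p q hpq0
    obtain ⟨c, hc⟩ : ∃ c:ℝ, c*(((p:ℝ)*b 0 0 + (q:ℝ)*b 1 0)^2
        + ((p:ℝ)*b 0 1 + (q:ℝ)*b 1 1)^2) = (b 0 0 * b 1 1 - b 0 1 * b 1 0)*2⁻¹ :=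
      ⟨(b 0 0 * b 1 1 - b 0 1 * b 1 0)*2⁻¹ / (((p:ℝ)*b 0 0 + (q:ℝ)*b 1 0)^2
        + ((p:ℝ)*b 0 1 + (q:ℝ)*b 1 1)^2), div_mul_cancel₀ _ hQpos'.ne'⟩
    obtain ⟨x, hxlat, pt, hpt1, hpt2⟩ := him _
      (c • (EuclideanSpace.single 0 (-((p:ℝ)*b 0 1 + (q:ℝ)*b 1 1))
        + EuclideanSpace.single 1 ((p:ℝ)*b 0 0 + (q:ℝ)*b 1 0) : Euc 2)) hrank
    rw [Set.mem_vadd_set] at hpt1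
    obtain ⟨y, hy, hyp⟩ := hpt1
    rw [SetLike.mem_coe, Submodule.mem_span_singleton] at hy
    obtain ⟨τ, rfl⟩ := hy
    rw [Set.mem_vadd_set] at hpt2
    obtain ⟨z, hz, hzp⟩ := hpt2
    obtain ⟨m, n, hxeq⟩ := mem_lat.mp hxlat
    have h1 : x + z = (c • (EuclideanSpace.single 0 (-((p:ℝ)*b 0 1 + (q:ℝ)*b 1 1))
        + EuclideanSpace.single 1 ((p:ℝ)*b 0 0 + (q:ℝ)*b 1 0) : Euc 2))
        + τ • ((p:ℝ) • b 0 + (q:ℝ) • b 1 : Euc 2) := by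
      have h2 := hzp.trans hyp.symm
      simpa [vadd_eq_add] using h2
    have hzeq := eq_sub_of_add_eq' h1
    have hz0 : z 0 = c * (-((p:ℝ)*b 0 1 + (q:ℝ)*b 1 1))
        + τ * ((p:ℝ)*b 0 0 + (q:ℝ)*b 1 0) - ((m:ℝ)*b 0 0 + (n:ℝ)*b 1 0) := by
      rw [hzeq, hxeq]
      simp [EuclideanSpace.single_apply]
      ring
    have hz1 : z 1 = c * ((p:ℝ)*b 0 0 + (q:ℝ)*b 1 0)
        + τ * ((p:ℝ)*b 0 1 + (q:ℝ)*b 1 1) - ((m:ℝ)*b 0 1 + (n:ℝ)*b 1 1) := by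
      rw [hzeq, hxeq]
      simp [EuclideanSpace.single_apply]
      ring
    have hzball : (z 0)^2 + (z 1)^2 ≤ 1 := (mem_ball_iff z).mp hz
    have hcross : z 0 * (-((p:ℝ)*b 0 1 + (q:ℝ)*b 1 1)) + z 1 * ((p:ℝ)*b 0 0 + (q:ℝ)*b 1 0)
        = (b 0 0 * b 1 1 - b 0 1 * b 1 0) * (2⁻¹ - ((n*p - m*q : ℤ):ℝ)) := by
      rw [hz0, hz1]
      push_cast
      linear_combination hc
    exact cross_contra (b 0 0 * b 1 1 - b 0 1 * b 1 0)
      ((p:ℝ)*b 0 0 + (q:ℝ)*b 1 0) ((p:ℝ)*b 0 1 + (q:ℝ)*b 1 1)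
      (z 0) (z 1) (n*p - m*q) hzball hcross hcon
  -- conclusion
  have hQw163 : Nq (b 0 0) (b 0 1) (b 1 0) (b 1 1) p q ≤ 16/3 := by nlinarith
  have hΔsq : (b 0 0 * b 1 1 - b 0 1 * b 1 0)^2 ≤ 64/3 := by nlinarith
  rw [covol_eq]
  have h64 : (64:ℝ)/3 = (8/Real.sqrt 3)^2 := by
    rw [div_pow, Real.sq_sqrt (by norm_num : (0:ℝ) ≤ 3)]
    norm_num
  have hfin := Real.sqrt_le_sqrt hΔsq
  rw [Real.sqrt_sq_eq_abs, h64, Real.sqrt_sq (by positivity)] at hfin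
  exact hfin



lemma normsq_pos {x : Euc 2} (hx : x ≠ 0) : 0 < (x 0)^2 + (x 1)^2 := by
  rcases lt_or_eq_of_le (by positivity : (0:ℝ) ≤ (x 0)^2 + (x 1)^2) with h | h
  · exact h
  · exact absurd (euc_ext (by simp; nlinarith [sq_nonneg (x 0), sq_nonneg (x 1)])
      (by simp; nlinarith [sq_nonneg (x 0), sq_nonneg (x 1)])) hx

/-- For the hexagonal lattice: one of the three shortest directions has a nonzero,
small projection on the normal `(α, β)`. -/
lemma hex_dirs (α β : ℝ) (hE : ¬(α = 0 ∧ β = 0)) :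
    ((4/Real.sqrt 3)*α ≠ 0 ∧ ((4/Real.sqrt 3)*α)^2 ≤ 4*(α^2+β^2)) ∨
    ((2/Real.sqrt 3)*α + 2*β ≠ 0 ∧ ((2/Real.sqrt 3)*α + 2*β)^2 ≤ 4*(α^2+β^2)) ∨
    (-(2/Real.sqrt 3)*α + 2*β ≠ 0 ∧ (-(2/Real.sqrt 3)*α + 2*β)^2 ≤ 4*(α^2+β^2)) := by
  have hs3 : Real.sqrt 3 ^ 2 = 3 := Real.sq_sqrt (by norm_num)
  have hs3pos : (0:ℝ) < Real.sqrt 3 := Real.sqrt_pos.mpr (by norm_num)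
  have h2s : (2:ℝ)/Real.sqrt 3 = 2*Real.sqrt 3/3 := by
    rw [div_eq_div_iff hs3pos.ne' (by norm_num)]
    nlinarith
  have h4s : (4:ℝ)/Real.sqrt 3 = 4*Real.sqrt 3/3 := by
    rw [div_eq_div_iff hs3pos.ne' (by norm_num)]
    nlinarith
  rcases eq_or_ne α 0 with hα | hα
  · right; left
    subst hα
    have hβ : β ≠ 0 := by tauto
    constructor
    · simpa using hβ
    · nlinarith
  · rcases le_or_gt (α^2) (3*β^2) with hcase | hcase
    · left
      constructor
      · exact mul_ne_zero (by positivity) hα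
      · rw [h4s]; nlinarith
    · rcases le_or_gt (α*β) 0 with hsign | hsign
      · right; left
        constructor
        · intro h0
          rw [h2s] at h0
          have hβ : β = -(Real.sqrt 3)*α/3 := by linarith
          rw [hβ] at hcase
          nlinarith [hs3]
        · rw [h2s]; nlinarith
      · right; right
        constructor
        · intro h0
          rw [neg_mul, h2s] at h0
          have hβ : β = (Real.sqrt 3)*α/3 := by linarith
          rw [hβ] at hcase
          nlinarith [hs3]
        · rw [neg_mul, h2s]; nlinarith

/-- Given a lattice direction with nonzero small projection on the normal of the line,
the line meets some translated ball. -/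
lemma imp_witness (b : Fin 2 → Euc 2) (v d : Euc 2) (hd : d ≠ 0) (mw nw : ℤ)
    (hune : ((mw:ℝ)*b 0 0 + nw*b 1 0)*(-(d 1)) + ((mw:ℝ)*b 0 1 + nw*b 1 1)*(d 0) ≠ 0)
    (hule : (((mw:ℝ)*b 0 0 + nw*b 1 0)*(-(d 1)) + ((mw:ℝ)*b 0 1 + nw*b 1 1)*(d 0))^2
      ≤ 4*((d 0)^2 + (d 1)^2)) :
    ∃ x ∈ latticeOf b,
      ((v +ᵥ ((Submodule.span ℝ {d} : Submodule ℝ (Euc 2)) : Set (Euc 2)))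
        ∩ (x +ᵥ unitBall 2)).Nonempty := by
  have hE : 0 < (d 0)^2 + (d 1)^2 := normsq_pos hd
  obtain ⟨δ, hδdef⟩ : ∃ r:ℝ, r = ((mw:ℝ)*b 0 0 + nw*b 1 0)*(-(d 1))
      + ((mw:ℝ)*b 0 1 + nw*b 1 1)*(d 0) := ⟨_, rfl⟩
  rw [← hδdef] at hune hule
  obtain ⟨γ, hγdef⟩ : ∃ r:ℝ, r = v 0 * (-(d 1)) + v 1 * (d 0) := ⟨_, rfl⟩
  obtain ⟨N, hN⟩ : ∃ N:ℤ, N = round (γ/δ) := ⟨_, rfl⟩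
  obtain ⟨η, hη⟩ : ∃ r:ℝ, r = (N:ℝ)*δ - γ := ⟨_, rfl⟩
  have hηb : |η| ≤ |δ|/2 := by
    have h1 : |γ/δ - (N:ℝ)| ≤ 1/2 := by rw [hN]; exact abs_sub_round _
    have h2 : η = (γ/δ - N) * (-δ) := by rw [hη]; field_simp; ring
    rw [h2, abs_mul, abs_neg]
    calc |γ/δ - (N:ℝ)| * |δ| ≤ (1/2) * |δ| := mul_le_mul_of_nonneg_right h1 (abs_nonneg δ)
      _ = |δ|/2 := by ring
  have hη2 : η^2 ≤ (d 0)^2 + (d 1)^2 := by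
    have h := pow_le_pow_left₀ (abs_nonneg η) hηb 2
    rw [sq_abs, div_pow, sq_abs] at h
    nlinarith
  set x : Euc 2 := ((N*mw : ℤ):ℝ) • b 0 + ((N*nw : ℤ):ℝ) • b 1 with hx
  refine ⟨x, mem_lat.mpr ⟨N*mw, N*nw, rfl⟩, ?_⟩
  set eV : Euc 2 := EuclideanSpace.single 0 (-(d 1)) + EuclideanSpace.single 1 (d 0) with heV
  set p : Euc 2 := x - (η/((d 0)^2 + (d 1)^2)) • eV with hp
  have hp0 : p 0 = ((N*mw : ℤ):ℝ)*b 0 0 + ((N*nw : ℤ):ℝ)*b 1 0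
      - (η/((d 0)^2 + (d 1)^2))*(-(d 1)) := by
    rw [hp, hx, heV]
    simp [EuclideanSpace.single_apply]
  have hp1 : p 1 = ((N*mw : ℤ):ℝ)*b 0 1 + ((N*nw : ℤ):ℝ)*b 1 1
      - (η/((d 0)^2 + (d 1)^2))*(d 0) := by
    rw [hp, hx, heV]
    simp [EuclideanSpace.single_apply]
  have horth : (p 0 - v 0)*(-(d 1)) + (p 1 - v 1)*(d 0) = 0 := by
    rw [hp0, hp1, hη, hδdef, hγdef]
    push_cast
    field_simp
    ring
  refine ⟨p, ?_, ?_⟩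
  · rw [Set.mem_vadd_set]
    refine ⟨p - v, ?_, by simp [vadd_eq_add]⟩
    rw [SetLike.mem_coe, Submodule.mem_span_singleton]
    refine ⟨((p 0 - v 0)*d 0 + (p 1 - v 1)*d 1)/((d 0)^2 + (d 1)^2), ?_⟩
    apply euc_ext
    · simp only [PiLp.smul_apply, smul_eq_mul, PiLp.sub_apply]
      field_simp
      linear_combination (d 1) * horth
    · simp only [PiLp.smul_apply, smul_eq_mul, PiLp.sub_apply]
      field_simp
      linear_combination (-(d 0)) * horth
  · rw [Set.mem_vadd_set]
    refine ⟨p - x, ?_, by simp [vadd_eq_add]⟩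
    rw [mem_ball_iff]
    have hc0 : (p - x) 0 = -((η/((d 0)^2 + (d 1)^2))*(-(d 1))) := by
      rw [hp, heV]
      simp [EuclideanSpace.single_apply]
    have hc1 : (p - x) 1 = -((η/((d 0)^2 + (d 1)^2))*(d 0)) := by
      rw [hp, heV]
      simp [EuclideanSpace.single_apply]
    rw [hc0, hc1]
    have hiden : (-((η/((d 0)^2 + (d 1)^2))*(-(d 1))))^2
        + (-((η/((d 0)^2 + (d 1)^2))*(d 0)))^2 = η^2/((d 0)^2 + (d 1)^2) := by
      field_simp
      ring
    rw [hiden]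
    exact (div_le_one hE).mpr hη2



def hexb : Fin 2 → Euc 2 := fun i =>
  if i = 0 then EuclideanSpace.single 0 (4/Real.sqrt 3)
  else EuclideanSpace.single 0 (2/Real.sqrt 3) + EuclideanSpace.single 1 2

lemma hexb00 : hexb 0 0 = 4/Real.sqrt 3 := by simp [hexb]
lemma hexb01 : hexb 0 1 = 0 := by simp [hexb]
lemma hexb10 : hexb 1 0 = 2/Real.sqrt 3 := by simp [hexb, EuclideanSpace.single_apply]
lemma hexb11 : hexb 1 1 = 2 := by simp [hexb, EuclideanSpace.single_apply]

lemma hexb_li : LinearIndependent ℝ hexb := by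
  rw [Fintype.linearIndependent_iff]
  intro g hg
  have hs3pos : (0:ℝ) < Real.sqrt 3 := Real.sqrt_pos.mpr (by norm_num)
  rw [Fin.sum_univ_two] at hg
  have h1 := congrArg (fun z : Euc 2 => z 1) hg
  have h0 := congrArg (fun z : Euc 2 => z 0) hg
  simp only [PiLp.add_apply, PiLp.smul_apply, smul_eq_mul] at h0 h1
  rw [hexb01, hexb11] at h1
  rw [hexb00, hexb10] at h0
  simp at h0 h1
  have hg1 : g 1 = 0 := by linarith
  have hg0 : g 0 = 0 := by
    rw [hg1] at h0
    have h4 : (4:ℝ)/Real.sqrt 3 ≠ 0 := by positivity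
    rcases mul_eq_zero.mp (by linarith : g 0 * (4/Real.sqrt 3) = 0) with h | h
    · exact h
    · exact absurd h h4
  intro i; fin_cases i <;> assumption

lemma hexb_imp : ∀ (W : Submodule ℝ (Euc 2)) (v : Euc 2), Module.finrank ℝ W = 1 →
    ∃ x ∈ latticeOf hexb, ((v +ᵥ (W : Set (Euc 2))) ∩ (x +ᵥ unitBall 2)).Nonempty := by
  intro W v hrank
  have hWbot : W ≠ ⊥ := by
    intro h
    rw [h, finrank_bot] at hrank
    exact one_ne_zero hrank.symm
  obtain ⟨d, hdW, hd0⟩ := Submodule.exists_mem_ne_zero_of_ne_bot hWbot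
  have hW : Submodule.span ℝ {d} = W := by
    apply Submodule.eq_of_le_of_finrank_eq
    · rw [Submodule.span_le, Set.singleton_subset_iff]; exact hdW
    · rw [finrank_span_singleton hd0, hrank]
  rw [← hW]
  have hdirs := hex_dirs (-(d 1)) (d 0) (by
    rintro ⟨h1, h2⟩
    exact hd0 (euc_ext (by simpa using h2) (by simpa using (neg_eq_zero.mp h1))))
  rcases hdirs with ⟨hne, hle⟩ | ⟨hne, hle⟩ | ⟨hne, hle⟩
  · apply imp_witness hexb v d hd0 1 0
    · rw [hexb00, hexb01]; push_cast; simpa using hne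
    · rw [hexb00, hexb01, hexb10, hexb11]; push_cast
      convert hle using 2 <;> ring
  · apply imp_witness hexb v d hd0 0 1
    · rw [hexb10, hexb11]; push_cast; simpa using hne
    · rw [hexb00, hexb01, hexb10, hexb11]; push_cast
      convert hle using 2 <;> ring
  · apply imp_witness hexb v d hd0 (-1) 1
    · rw [hexb00, hexb01, hexb10, hexb11]; push_cast
      convert hne using 1; ring
    · rw [hexb00, hexb01, hexb10, hexb11]; push_cast
      convert hle using 2 <;> ring


end S6

/-- `d_{2,1} = √3 · π / 8`. -/
theorem stmt_6 : dImpBall 2 1 = Real.sqrt 3 * Real.pi / 8 := by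
  have hs3pos : (0:ℝ) < Real.sqrt 3 := Real.sqrt_pos.mpr (by norm_num)
  have hvol : (volume (unitBall 2)).toReal = Real.pi := by
    rw [unitBall]
    rw [EuclideanSpace.volume_closedBall]
    norm_num [Real.Gamma_two, Real.sq_sqrt Real.pi_pos.le,
      ENNReal.toReal_ofReal Real.pi_pos.le]
  have hcovol : covol S6.hexb = 8/Real.sqrt 3 := by
    rw [S6.covol_eq, S6.hexb00, S6.hexb01, S6.hexb10, S6.hexb11]
    rw [show (4/Real.sqrt 3*2 - 0*(2/Real.sqrt 3) : ℝ) = 8/Real.sqrt 3 from by ring]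
    exact abs_of_pos (by positivity)
  have htarget : Real.sqrt 3 * Real.pi / 8 = (volume (unitBall 2)).toReal / covol S6.hexb := by
    rw [hvol, hcovol, eq_div_iff (by positivity : (8:ℝ)/Real.sqrt 3 ≠ 0)]
    field_simp
  have hmem : Real.sqrt 3 * Real.pi / 8 ∈ { d : ℝ | ∃ b : Fin 2 → Euc 2,
      LinearIndependent ℝ b ∧ IsImpassable 1 (unitBall 2) (latticeOf b) ∧
      d = (volume (unitBall 2)).toReal / covol b } :=
    ⟨S6.hexb, S6.hexb_li, S6.hexb_imp, htarget⟩
  rw [dImpBall, dImp]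
  apply le_antisymm
  · apply csInf_le
    · refine ⟨0, ?_⟩
      rintro d ⟨b, hb, him, rfl⟩
      exact div_nonneg ENNReal.toReal_nonneg (abs_nonneg _)
    · exact hmem
  · apply le_csInf ⟨_, hmem⟩
    rintro d ⟨b, hb, him, rfl⟩
    have hc := S6.key_lower hb him
    have hcpos : 0 < covol b := by
      rw [S6.covol_eq]
      exact abs_pos.mpr (S6.det_ne_zero hb)
    rw [hvol, le_div_iff₀ hcpos]
    calc Real.sqrt 3 * Real.pi/8 * covol b
        ≤ Real.sqrt 3 * Real.pi/8 * (8/Real.sqrt 3) :=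
          mul_le_mul_of_nonneg_left hc (by positivity)
      _ = Real.pi := by field_simp
end
end

section
/- Let 1 ≤ k ≤ n−1 be integers and K ⊂ ℝⁿ a convex body with δ_L(K) < d_{n,k}(K). Then for every full-rank lattice L ⊂ ℝⁿ such that {K + x : x ∈ L} is a packing (the translates have pairwise disjoint interiors), there exists a k-dimensional affine subspace A_k ⊂ ℝⁿ such that the interior of A_k + ((d_{n,k}(K)/δ_L(K))^{1/n} − 1)·(−K) is disjoint from ⋃_{x∈L}(K + x). -/
open scoped Pointwise
open MeasureTheory RealInnerProductSpace

noncomputable section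

namespace Stmt17Aux

variable {n : ℕ}

theorem latticeOf_eq_span (b : Fin n → Euc n) :
    latticeOf b = ((Submodule.span ℤ (Set.range b) : Submodule ℤ (Euc n)) : Set (Euc n)) := by
  ext x
  rw [SetLike.mem_coe, Submodule.mem_span_range_iff_exists_fun ℤ]
  constructor
  · rintro ⟨c, rfl⟩
    exact ⟨c, by simp [Int.cast_smul_eq_zsmul]⟩
  · rintro ⟨c, hc⟩
    exact ⟨c, by rw [← hc]; simp [Int.cast_smul_eq_zsmul]⟩

theorem zero_mem_latticeOf (b : Fin n → Euc n) : (0 : Euc n) ∈ latticeOf b :=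
  ⟨0, by simp⟩

theorem add_mem_latticeOf {b : Fin n → Euc n} {x y : Euc n}
    (hx : x ∈ latticeOf b) (hy : y ∈ latticeOf b) : x + y ∈ latticeOf b := by
  rw [latticeOf_eq_span] at *
  exact Submodule.add_mem _ hx hy

theorem neg_mem_latticeOf {b : Fin n → Euc n} {x : Euc n}
    (hx : x ∈ latticeOf b) : -x ∈ latticeOf b := by
  rw [latticeOf_eq_span] at *
  exact Submodule.neg_mem _ hx

theorem latticeOf_smul (c : ℝ) (b : Fin n → Euc n) :
    latticeOf (fun i => c • b i) = c • latticeOf b := by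
  ext x
  constructor
  · rintro ⟨f, rfl⟩
    exact ⟨∑ i, (f i : ℝ) • b i, ⟨f, rfl⟩, by
      simp_rw [Finset.smul_sum, smul_comm c]⟩
  · rintro ⟨y, ⟨f, rfl⟩, rfl⟩
    exact ⟨f, by simp_rw [Finset.smul_sum, smul_comm c]⟩

theorem covol_smul (c : ℝ) (b : Fin n → Euc n) :
    covol (fun i => c • b i) = |c| ^ n * covol b := by
  have h : (Matrix.of fun i j => (c • b i) j) = c • (Matrix.of fun i j => b i j) := by
    ext i j
    simp [Matrix.smul_apply]
  rw [covol, h, Matrix.det_smul, abs_mul, abs_pow]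
  simp [covol]

theorem linearIndependent_smul {b : Fin n → Euc n} (hb : LinearIndependent ℝ b)
    {c : ℝ} (hc : c ≠ 0) : LinearIndependent ℝ (fun i => c • b i) := by
  have := hb.map' (c • (LinearMap.id : Euc n →ₗ[ℝ] Euc n)) (by
    rw [LinearMap.ker_eq_bot]
    intro x y hxy
    have : c • x = c • y := by simpa using hxy
    exact smul_right_injective _ hc this)
  exact this


theorem vol_fund (b : Module.Basis (Fin n) ℝ (Euc n)) :
    volume (ZSpan.fundamentalDomain b)
      = ENNReal.ofReal |Matrix.det (Matrix.of fun i j => b i j)| := by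
  have hmp := EuclideanSpace.volume_preserving_symm_measurableEquiv_toLp (Fin n)
  set e : Euc n ≃ₗ[ℝ] (Fin n → ℝ) := (WithLp.linearEquiv 2 ℝ (Fin n → ℝ)) with he
  have himg : (e : Euc n → (Fin n → ℝ)) '' (ZSpan.fundamentalDomain b)
      = ZSpan.fundamentalDomain (b.map e) := ZSpan.map_fundamentalDomain b e
  have hpre : (MeasurableEquiv.toLp 2 (Fin n → ℝ)).symm ⁻¹' (ZSpan.fundamentalDomain (b.map e))
      = ZSpan.fundamentalDomain b := by
    rw [← himg]
    ext x
    simp [he]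
    exact ⟨fun ⟨y, hy, hyx⟩ => (WithLp.ofLp_injective 2 hyx) ▸ hy, fun h => ⟨x, h, rfl⟩⟩
  have hh := hmp.measure_preimage (s := ZSpan.fundamentalDomain (b.map e))
    (ZSpan.fundamentalDomain_measurableSet (b.map e)).nullMeasurableSet
  rw [hpre] at hh
  rw [hh, ZSpan.volume_fundamentalDomain]
  rfl

theorem volume_K_pos {K : Set (Euc n)} (hK : IsConvexBody K) : 0 < (volume K).toReal := by
  obtain ⟨z, hz⟩ := hK.2.2
  obtain ⟨r, hr, hball⟩ := Metric.isOpen_iff.1 isOpen_interior z hz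
  have h1 : 0 < volume K := by
    refine lt_of_lt_of_le ?_ (measure_mono ((hball.trans interior_subset)))
    simpa using Metric.measure_ball_pos volume z hr
  exact ENNReal.toReal_pos h1.ne' hK.2.1.measure_lt_top.ne

theorem covol_pos (hn : 0 < n) {b : Fin n → Euc n} (hb : LinearIndependent ℝ b) : 0 < covol b := by
  haveI : Nonempty (Fin n) := Fin.pos_iff_nonempty.1 hn
  have hcard : Fintype.card (Fin n) = Module.finrank ℝ (Euc n) := by simp
  set bB : Module.Basis (Fin n) ℝ (Euc n) := basisOfLinearIndependentOfCardEqFinrank hb hcard with hbB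
  have hcoe : ⇑bB = b := coe_basisOfLinearIndependentOfCardEqFinrank hb hcard
  have h := ZSpan.measure_fundamentalDomain_ne_zero bB (μ := volume)
  rw [vol_fund bB, hcoe] at h
  have : ¬ |Matrix.det (Matrix.of fun i j => b i j)| ≤ 0 := fun hle => h (by simp [ENNReal.ofReal_eq_zero.2 hle])
  exact lt_of_not_ge (fun hle => this (by simpa [covol] using hle))

theorem countable_latticeOf (b : Fin n → Euc n) : (latticeOf b).Countable := by
  have : latticeOf b = Set.range (fun c : Fin n → ℤ => ∑ i, (c i : ℝ) • b i) := by
    ext x; constructor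
    · rintro ⟨c, rfl⟩; exact ⟨c, rfl⟩
    · rintro ⟨c, rfl⟩; exact ⟨c, rfl⟩
  rw [this]
  exact Set.countable_range _

/-- volume of `K` is at most the covolume of any lattice packing. -/
theorem volume_le_covol (hn : 0 < n) {K : Set (Euc n)} (hK : IsConvexBody K)
    {b : Fin n → Euc n} (hb : IsLatticePacking K b) : (volume K).toReal ≤ covol b := by
  haveI : Nonempty (Fin n) := Fin.pos_iff_nonempty.1 hn
  by_contra hcon
  push_neg at hcon
  have hcard : Fintype.card (Fin n) = Module.finrank ℝ (Euc n) := by simp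
  set bB : Module.Basis (Fin n) ℝ (Euc n) := basisOfLinearIndependentOfCardEqFinrank hb.1 hcard with hbB
  have hcoe : ⇑bB = b := coe_basisOfLinearIndependentOfCardEqFinrank hb.1 hcard
  have hlat : latticeOf b = ((Submodule.span ℤ (Set.range ⇑bB) : Submodule ℤ (Euc n)) : Set (Euc n)) := by
    rw [hcoe]; exact latticeOf_eq_span b
  haveI : Countable ((Submodule.span ℤ (Set.range ⇑bB)).toAddSubgroup) := by
    have h : (((Submodule.span ℤ (Set.range ⇑bB) : Submodule ℤ (Euc n))) : Set (Euc n)).Countable := by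
      rw [← hlat]; exact countable_latticeOf b
    exact h.to_subtype
  have fund := ZSpan.isAddFundamentalDomain' bB volume
  -- interior K has same volume as K
  have hint : volume (interior K) = volume K := by
    have hfr : volume (frontier K) = 0 := Convex.addHaar_frontier volume hK.1
    have : volume (closure K) ≤ volume (interior K) + volume (frontier K) := by
      rw [closure_eq_interior_union_frontier K]
      exact measure_union_le _ _
    have hcl : closure K = K := hK.2.1.isClosed.closure_eq
    have h1 : volume K ≤ volume (interior K) := by
      calc volume K = volume (closure K) := by rw [hcl]
      _ ≤ volume (interior K) + volume (frontier K) := this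
      _ = volume (interior K) := by rw [hfr, add_zero]
    exact le_antisymm (measure_mono interior_subset) h1
  have hvol : volume (ZSpan.fundamentalDomain bB) < volume (interior K) := by
    rw [vol_fund bB, hint, hcoe]
    have h2 : volume K = ENNReal.ofReal (volume K).toReal := by
      rw [ENNReal.ofReal_toReal hK.2.1.measure_lt_top.ne]
    rw [h2]
    exact ENNReal.ofReal_lt_ofReal_iff_of_nonneg (le_of_lt (covol_pos hn hb.1)) |>.2 (by
      simpa [covol] using hcon)
  obtain ⟨x, y, hxy, hnd⟩ := exists_pair_mem_lattice_not_disjoint_vadd fund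
    (measurableSet_interior).nullMeasurableSet hvol
  apply hnd
  have hx : (x : Euc n) ∈ latticeOf b := by rw [hlat]; exact x.2
  have hy : (y : Euc n) ∈ latticeOf b := by rw [hlat]; exact y.2
  have hne : (x : Euc n) ≠ (y : Euc n) := by
    intro h; exact hxy (Subtype.ext h)
  have := hb.2 hx hy hne
  have hxs : (x +ᵥ interior K : Set (Euc n)) = interior ((x : Euc n) +ᵥ K) := by
    rw [← interior_vadd]
    rfl
  have hys : (y +ᵥ interior K : Set (Euc n)) = interior ((y : Euc n) +ᵥ K) := by
    rw [← interior_vadd]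
    rfl
  rw [hxs, hys]
  exact this


theorem mem_vadd_set' {s : Set (Euc n)} {x a : Euc n} : a ∈ x +ᵥ s ↔ a - x ∈ s := by
  rw [Set.mem_vadd_set]
  constructor
  · rintro ⟨y, hy, rfl⟩; simpa [vadd_eq_add] using hy
  · intro h; exact ⟨a - x, h, by simp [vadd_eq_add]⟩

theorem db_le_packingDensity (hn : 0 < n) {K : Set (Euc n)} (hK : IsConvexBody K)
    {b : Fin n → Euc n} (hb : IsLatticePacking K b) :
    (volume K).toReal / covol b ≤ packingDensity n K := by
  apply le_csSup
  · refine ⟨1, ?_⟩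
    rintro d ⟨b', hb', rfl⟩
    rw [div_le_one (covol_pos hn hb'.1)]
    exact volume_le_covol hn hK hb'
  · exact ⟨b, hb, rfl⟩

theorem dImp_le_of_impassable (hn : 0 < n) {K : Set (Euc n)} {k : ℕ}
    {b : Fin n → Euc n} (hb : LinearIndependent ℝ b) (him : IsImpassable k K (latticeOf b)) :
    dImp n k K ≤ (volume K).toReal / covol b := by
  apply csInf_le
  · refine ⟨0, ?_⟩
    rintro d ⟨b', hb', him', rfl⟩
    exact div_nonneg ENNReal.toReal_nonneg (le_of_lt (covol_pos hn hb'))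
  · exact ⟨b, hb, him, rfl⟩

theorem impassable_vadd_iff {k : ℕ} {K L : Set (Euc n)} (z : Euc n) :
    IsImpassable k (z +ᵥ K) L ↔ IsImpassable k K L := by
  constructor
  · intro h W v hf
    obtain ⟨x, hx, y, hy1, hy2⟩ := h W (v + z) hf
    refine ⟨x, hx, y - z, ?_, ?_⟩
    · obtain ⟨w, hw, rfl⟩ := hy1
      exact ⟨w, hw, by simp [vadd_eq_add]; abel⟩
    · rw [mem_vadd_set'] at hy2 ⊢
      rw [mem_vadd_set'] at hy2
      have he : y - z - x = y - x - z := by abel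
      rw [he]; exact hy2
  · intro h W v hf
    obtain ⟨x, hx, y, hy1, hy2⟩ := h W (v - z) hf
    refine ⟨x, hx, y + z, ?_, ?_⟩
    · obtain ⟨w, hw, rfl⟩ := hy1
      exact ⟨w, hw, by simp [vadd_eq_add]; abel⟩
    · rw [mem_vadd_set'] at hy2 ⊢
      rw [mem_vadd_set']
      have he : y + z - x - z = y - x := by abel
      rw [he]; exact hy2

theorem dImp_vadd (k : ℕ) {K : Set (Euc n)} (z : Euc n) :
    dImp n k (z +ᵥ K) = dImp n k K := by
  unfold dImp
  congr 1
  ext d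
  simp only [Set.mem_setOf_eq]
  constructor
  · rintro ⟨b', h1, h2, rfl⟩
    exact ⟨b', h1, (impassable_vadd_iff z).1 h2, by rw [measure_vadd]⟩
  · rintro ⟨b', h1, h2, rfl⟩
    exact ⟨b', h1, (impassable_vadd_iff z).2 h2, by rw [measure_vadd]⟩

theorem isConvexBody_vadd {K : Set (Euc n)} (hK : IsConvexBody K) (z : Euc n) :
    IsConvexBody (z +ᵥ K) := by
  refine ⟨?_, ?_, ?_⟩
  · have : z +ᵥ K = (fun y => z + y) '' K := rfl
    rw [this]
    exact (hK.1.translate z)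
  · have : z +ᵥ K = (fun y => z + y) '' K := rfl
    rw [this]
    exact hK.2.1.image (continuous_const.add continuous_id)
  · rw [interior_vadd]
    obtain ⟨y, hy⟩ := hK.2.2
    exact ⟨z + y, y, hy, rfl⟩


theorem avoid_at (hn : 0 < n) {K : Set (Euc n)} {k : ℕ}
    {b : Fin n → Euc n} (hb : LinearIndependent ℝ b) (bB : Module.Basis (Fin n) ℝ (Euc n))
    (hcoe : ⇑bB = b) {t : ℝ} (ht : 0 < t)
    (hlt : t ^ n * ((volume K).toReal / covol b) < dImp n k K) :
    ∃ (W : Submodule ℝ (Euc n)) (p : Euc n), Module.finrank ℝ W = k ∧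
      p ∈ ZSpan.fundamentalDomain bB ∧
      ∀ x ∈ latticeOf b, ((p +ᵥ (W : Set (Euc n))) ∩ (x +ᵥ t • K)) = ∅ := by
  set c : ℝ := t⁻¹ with hc
  have hc0 : c ≠ 0 := inv_ne_zero ht.ne'
  set b' : Fin n → Euc n := fun i => c • b i with hb'
  have hb'li : LinearIndependent ℝ b' := linearIndependent_smul hb hc0
  have hcov : covol b' = |c| ^ n * covol b := covol_smul c b
  have hct : c * t = 1 := inv_mul_cancel₀ ht.ne'
  have hdens : (volume K).toReal / covol b' = t ^ n * ((volume K).toReal / covol b) := by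
    have hcb : covol b ≠ 0 := (covol_pos hn hb).ne'
    have htn : (t : ℝ) ^ n ≠ 0 := pow_ne_zero _ ht.ne'
    rw [hcov, abs_of_pos (inv_pos.2 ht), inv_pow]
    field_simp
  have hnotimp : ¬ IsImpassable k K (latticeOf b') := by
    intro him
    have := dImp_le_of_impassable hn hb'li him
    rw [hdens] at this
    exact absurd hlt (not_lt.2 this)
  rw [IsImpassable] at hnotimp
  push_neg at hnotimp
  obtain ⟨W, v, hf, hav⟩ := hnotimp
  have hav' : ∀ x ∈ latticeOf b', ((v +ᵥ (W : Set (Euc n))) ∩ (x +ᵥ K)) = ∅ := by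
    intro x hx
    rw [← Set.not_nonempty_iff_eq_empty]
    intro hne
    rw [Set.nonempty_iff_ne_empty] at hne
    exact hne (hav x hx)
  -- rescale by t
  have hscale : ∀ x ∈ latticeOf b, (((t • v) +ᵥ (W : Set (Euc n))) ∩ (x +ᵥ t • K)) = ∅ := by
    intro x hx
    rw [Set.eq_empty_iff_forall_notMem]
    rintro y ⟨hy1, hy2⟩
    obtain ⟨w, hw, hwy⟩ := hy1
    have hwy : t • v + w = y := hwy
    rw [mem_vadd_set'] at hy2
    obtain ⟨q, hq, hq2⟩ := hy2
    have hxmem : c • x ∈ latticeOf b' := by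
      rw [hb', latticeOf_smul c b]
      exact ⟨x, hx, rfl⟩
    have hz : (v + c • w) ∈ ((v +ᵥ (W : Set (Euc n))) ∩ ((c • x) +ᵥ K)) := by
      constructor
      · exact ⟨c • w, W.smul_mem c hw, rfl⟩
      · rw [mem_vadd_set']
        have h1 : v + c • w - c • x = c • (y - x) := by
          rw [← hwy, smul_sub, smul_add, smul_smul, hct, one_smul]
        have h2 : c • (y - x) = q := by
          rw [← hq2, smul_smul, hct, one_smul]
        rw [h1, h2]
        exact hq
    rw [hav' (c • x) hxmem] at hz
    exact hz
  -- reduce modulo the lattice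
  set p : Euc n := ZSpan.fract bB (t • v) with hp
  have hpf : p ∈ ZSpan.fundamentalDomain bB := ZSpan.fract_mem_fundamentalDomain bB (t • v)
  have hy0 : t • v - p ∈ latticeOf b := by
    rw [latticeOf_eq_span, ← hcoe]
    have : t • v - p = (ZSpan.floor bB (t • v) : Euc n) := by
      rw [hp, ZSpan.fract_apply]; abel
    rw [this]
    exact SetLike.coe_mem _
  refine ⟨W, p, hf, hpf, ?_⟩
  intro x hx
  rw [Set.eq_empty_iff_forall_notMem]
  rintro y ⟨hy1, hy2⟩
  obtain ⟨w, hw, hwy⟩ := hy1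
  have hwy : p + w = y := hwy
  have hz : ((t • v) + w) ∈ (((t • v) +ᵥ (W : Set (Euc n))) ∩ ((x + (t • v - p)) +ᵥ t • K)) := by
    constructor
    · exact ⟨w, hw, rfl⟩
    · rw [mem_vadd_set'] at hy2 ⊢
      have he : t • v + w - (x + (t • v - p)) = y - x := by rw [← hwy]; abel
      rw [he]
      exact hy2
  rw [hscale _ (add_mem_latticeOf hx hy0)] at hz
  exact hz


theorem vadd_set_add (p : Euc n) (A B : Set (Euc n)) : (p +ᵥ A) + B = p +ᵥ (A + B) := by
  ext x
  simp only [Set.mem_add, mem_vadd_set']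
  constructor
  · rintro ⟨a, ha, b2, hb2, rfl⟩
    exact ⟨a - p, ha, b2, hb2, by abel⟩
  · rintro ⟨a, ha, b2, hb2, hs⟩
    refine ⟨p + a, by simpa using ha, b2, hb2, ?_⟩
    have h2 : p + a + b2 = p + (a + b2) := by abel
    rw [h2, hs]; abel

theorem smul_set_add' (r : ℝ) (A B : Set (Euc n)) : r • (A + B) = r • A + r • B := by
  ext x
  simp only [Set.mem_add, Set.mem_smul_set]
  constructor
  · rintro ⟨y, ⟨a, ha, b2, hb2, rfl⟩, rfl⟩
    exact ⟨r • a, ⟨a, ha, rfl⟩, r • b2, ⟨b2, hb2, rfl⟩, (smul_add r a b2).symm⟩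
  · rintro ⟨a, ⟨a', ha', rfl⟩, b2, ⟨b', hb', rfl⟩, rfl⟩
    exact ⟨a' + b', ⟨a', ha', b', hb', rfl⟩, smul_add r a' b'⟩

theorem smul_coe_submodule {c : ℝ} (hc : c ≠ 0) (W : Submodule ℝ (Euc n)) :
    c • (W : Set (Euc n)) = (W : Set (Euc n)) := by
  ext x
  simp only [Set.mem_smul_set, SetLike.mem_coe]
  constructor
  · rintro ⟨y, hy, rfl⟩; exact W.smul_mem c hy
  · intro hx; exact ⟨c⁻¹ • x, W.smul_mem _ hx, by rw [smul_smul, mul_inv_cancel₀ hc, one_smul]⟩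

theorem mem_shrink {C : Set (Euc n)} {q₀ : Euc n} (hq : q₀ ∈ interior C) {c : ℝ} (hc : 0 < c) :
    ∃ s : ℝ, 0 < s ∧ s < c ∧ c • q₀ ∈ s • C := by
  have hcont : Filter.Tendsto (fun u : ℝ => u • q₀) (nhds 1) (nhds q₀) := by
    have := (continuous_id.smul (continuous_const : Continuous fun _ : ℝ => q₀)).tendsto (1 : ℝ)
    have h2 : Filter.Tendsto (fun u : ℝ => u • q₀) (nhds 1) (nhds ((1:ℝ) • q₀)) := this
    rwa [one_smul] at h2
  have hev : ∀ᶠ u in nhds (1 : ℝ), u • q₀ ∈ interior C :=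
    hcont.eventually (isOpen_interior.mem_nhds hq)
  obtain ⟨ε, hε, hball⟩ := Metric.eventually_nhds_iff.1 hev
  set u : ℝ := 1 + min (ε / 2) 1 with hu
  have humin : 0 < min (ε / 2) 1 := lt_min (half_pos hε) one_pos
  have hu1 : 1 < u := by simp [hu, humin]
  have hu0 : (0 : ℝ) < u := lt_trans one_pos hu1
  have huε : dist u 1 < ε := by
    rw [Real.dist_eq, hu]
    rw [abs_of_pos (by linarith)]
    have : min (ε / 2) 1 ≤ ε / 2 := min_le_left _ _
    linarith
  have hmem : u • q₀ ∈ C := interior_subset (hball huε)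
  refine ⟨c / u, div_pos hc hu0, div_lt_self hc hu1, ?_⟩
  refine ⟨u • q₀, hmem, ?_⟩
  show (c / u) • (u • q₀) = c • q₀
  rw [smul_smul, div_mul_cancel₀ _ hu0.ne']


theorem exists_frame {k : ℕ} (W : Submodule ℝ (Euc n)) (hWk : Module.finrank ℝ W = k) :
    ∃ f : Fin k → Euc n, Orthonormal ℝ f ∧ (∀ i, f i ∈ W) ∧
      Submodule.span ℝ (Set.range f) = W := by
  set o : OrthonormalBasis (Fin k) ℝ W :=
    (stdOrthonormalBasis ℝ W).reindex (finCongr hWk) with ho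
  refine ⟨fun i => (o i : Euc n), ?_, fun i => (o i).2, ?_⟩
  · exact o.orthonormal.comp_linearIsometry W.subtypeₗᵢ
  · have h1 : Set.range (fun i => (o i : Euc n)) = (W.subtype) '' (Set.range o) := by
      rw [← Set.range_comp]; rfl
    have h2 : Submodule.span ℝ (Set.range ⇑o) = (⊤ : Submodule ℝ W) := by
      have := Module.Basis.span_eq o.toBasis
      rwa [OrthonormalBasis.coe_toBasis] at this
    rw [h1, Submodule.span_image, h2, Submodule.map_top, Submodule.range_subtype]

theorem neg_vadd_neg (z : Euc n) (K : Set (Euc n)) : -((-z) +ᵥ K) = z +ᵥ (-K) := by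
  ext x
  rw [Set.mem_neg, mem_vadd_set', mem_vadd_set', Set.mem_neg]
  constructor
  · intro h; convert h using 1; abel
  · intro h; convert h using 1; abel

theorem smul_vadd_set (c : ℝ) (u : Euc n) (A : Set (Euc n)) :
    c • (u +ᵥ A) = (c • u) +ᵥ (c • A) := by
  ext x
  rw [mem_vadd_set']
  simp only [Set.mem_smul_set]
  constructor
  · rintro ⟨y, hy, rfl⟩
    rw [mem_vadd_set'] at hy
    exact ⟨y - u, hy, by rw [smul_sub]⟩
  · rintro ⟨y, hy, hxy⟩
    refine ⟨u + y, by rw [mem_vadd_set']; simpa using hy, ?_⟩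
    show c • (u + y) = x
    rw [smul_add]
    have : c • y = x - c • u := hxy
    rw [this]; abel

theorem add_vadd_set_right (A : Set (Euc n)) (u : Euc n) (B : Set (Euc n)) :
    A + (u +ᵥ B) = u +ᵥ (A + B) := by
  rw [add_comm A (u +ᵥ B), vadd_set_add, add_comm B A]

theorem smul_subset_smul_of_zero_mem {K : Set (Euc n)} (hconv : Convex ℝ K)
    (h0 : (0 : Euc n) ∈ K) {τ T : ℝ} (hτ : 0 < τ) (hτT : τ ≤ T) :
    τ • K ⊆ T • K := by
  intro x hx
  obtain ⟨q, hq, rfl⟩ := hx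
  have hT : 0 < T := lt_of_lt_of_le hτ hτT
  refine ⟨(τ / T) • q, ?_, ?_⟩
  swap
  · show T • (τ / T) • q = τ • q
    rw [smul_smul, mul_div_cancel₀ _ hT.ne']
  exact hconv.smul_mem_of_zero_mem h0 hq ⟨by positivity, div_le_one_of_le₀ hτT hT.le⟩

end Stmt17Aux
open Stmt17Aux in
set_option maxHeartbeats 1000000 in
/-- For `1 ≤ k ≤ n-1` and a convex body `K` with `δ_L(K) < d_{n,k}(K)`, for
every lattice packing of translates of `K` there exists a `k`-dimensional affine subspace
`A_k` such that `int(A_k + ((d_{n,k}(K)/δ_L(K))^{1/n} − 1)·(−K))` is disjoint from the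
union of the packing. -/
theorem stmt_17 (n k : ℕ) (hk : 1 ≤ k) (hkn : k ≤ n - 1)
    (K : Set (Euc n)) (hK : IsConvexBody K)
    (hlt : packingDensity n K < dImp n k K)
    (b : Fin n → Euc n) (hb : IsLatticePacking K b) :
    ∃ (W : Submodule ℝ (Euc n)) (v : Euc n), Module.finrank ℝ W = k ∧
      Disjoint
        (interior ((v +ᵥ (W : Set (Euc n))) +
          ((dImp n k K / packingDensity n K) ^ ((1 : ℝ) / (n : ℝ)) - 1) • (-K)))
        (⋃ x ∈ latticeOf b, x +ᵥ K) := by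
  classical
  have hn : 0 < n := by omega
  set D := dImp n k K with hD
  set δ := packingDensity n K with hδdef
  set db := (volume K).toReal / covol b with hdb
  have hvol : 0 < (volume K).toReal := volume_K_pos hK
  have hcovb : 0 < covol b := covol_pos hn hb.1
  have hdb0 : 0 < db := div_pos hvol hcovb
  have hdbδ : db ≤ δ := db_le_packingDensity hn hK hb
  have hδ0 : 0 < δ := lt_of_lt_of_le hdb0 hdbδ
  have hD0 : 0 < D := lt_trans hδ0 hlt
  have hratio : 1 < D / δ := (one_lt_div hδ0).2 hlt
  set lam := (D / δ) ^ ((1 : ℝ) / (n : ℝ)) with hlam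
  have hn' : (0 : ℝ) < n := by exact_mod_cast hn
  have hlam1 : 1 < lam := by
    rw [hlam]
    exact (Real.one_lt_rpow_iff_of_pos (by positivity)).2 (Or.inl ⟨hratio, by positivity⟩)
  have hlam0 : 0 < lam := lt_trans one_pos hlam1
  have hlamn : lam ^ n = D / δ := by
    rw [hlam, ← Real.rpow_natCast ((D / δ) ^ ((1 : ℝ) / (n : ℝ))) n,
      ← Real.rpow_mul (by positivity), one_div, inv_mul_cancel₀ hn'.ne', Real.rpow_one]
  set c := lam - 1 with hc
  have hc0 : 0 < c := by rw [hc]; linarith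
  -- translate K so that 0 is an interior point
  obtain ⟨z0, hz0⟩ := hK.2.2
  set K' : Set (Euc n) := (-z0) +ᵥ K with hK'def
  have hK' : IsConvexBody K' := isConvexBody_vadd hK (-z0)
  have h0K' : (0 : Euc n) ∈ interior K' := by
    rw [hK'def, interior_vadd]
    exact ⟨z0, hz0, by simp [vadd_eq_add]⟩
  obtain ⟨ρ, hρ0, hρ⟩ := Metric.isOpen_iff.1 isOpen_interior 0 h0K'
  have hρK : Metric.ball (0 : Euc n) ρ ⊆ K' := hρ.trans interior_subset
  have h0K : (0 : Euc n) ∈ K' := interior_subset h0K'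
  have hDK' : dImp n k K' = D := dImp_vadd k (-z0)
  have hvolK' : volume K' = volume K := by
    rw [hK'def]; exact measure_vadd _ _ _
  -- fix a basis with coe b
  haveI : Nonempty (Fin n) := Fin.pos_iff_nonempty.1 hn
  have hcard : Fintype.card (Fin n) = Module.finrank ℝ (Euc n) := by simp
  set bB : Module.Basis (Fin n) ℝ (Euc n) := basisOfLinearIndependentOfCardEqFinrank hb.1 hcard with hbB
  have hcoe : ⇑bB = b := coe_basisOfLinearIndependentOfCardEqFinrank hb.1 hcard
  -- an increasing sequence t j → lam
  set t : ℕ → ℝ := fun j => lam * (1 - 1 / (j + 2)) with ht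
  have htfrac : ∀ j : ℕ, (0 : ℝ) < 1 / (j + 2) ∧ (1 : ℝ) / (j + 2) < 1 := by
    intro j
    constructor
    · positivity
    · rw [div_lt_one (by positivity)]
      have : (0 : ℝ) ≤ j := Nat.cast_nonneg j
      linarith
  have htpos : ∀ j, 0 < t j := by
    intro j
    have := htfrac j
    have h1 : (0 : ℝ) < 1 - 1 / (j + 2) := by linarith [this.2]
    exact mul_pos hlam0 h1
  have htlt : ∀ j, t j < lam := by
    intro j
    have h := htfrac j
    have h2 : 1 - 1 / ((j : ℝ) + 2) < 1 := by linarith [h.1]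
    calc t j = lam * (1 - 1 / ((j : ℝ) + 2)) := rfl
      _ < lam * 1 := by exact mul_lt_mul_of_pos_left h2 hlam0
      _ = lam := mul_one lam
  have httend : Filter.Tendsto t Filter.atTop (nhds lam) := by
    rw [ht]
    have h1 : Filter.Tendsto (fun j : ℕ => (1 : ℝ) / (j + 2)) Filter.atTop (nhds 0) := by
      apply Filter.Tendsto.div_atTop tendsto_const_nhds
      apply Filter.tendsto_atTop_add_const_right
      exact tendsto_natCast_atTop_atTop
    have h2 : Filter.Tendsto (fun j : ℕ => lam * (1 - 1 / (j + 2))) Filter.atTop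
        (nhds (lam * (1 - 0))) := (tendsto_const_nhds.sub h1).const_mul lam
    simpa using h2
  -- planes avoiding the scaled lattices
  have hplanes : ∀ j : ℕ, ∃ (W : Submodule ℝ (Euc n)) (p : Euc n),
      Module.finrank ℝ W = k ∧ p ∈ ZSpan.fundamentalDomain bB ∧
      ∀ x ∈ latticeOf b, ((p +ᵥ (W : Set (Euc n))) ∩ (x +ᵥ t j • K')) = ∅ := by
    intro j
    apply avoid_at hn hb.1 bB hcoe (htpos j)
    rw [hDK', hvolK', ← hdb]
    have h1 : (t j) ^ n < lam ^ n := by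
      apply pow_lt_pow_left₀ (htlt j) (le_of_lt (htpos j))
      exact hn.ne'
    calc (t j) ^ n * db < lam ^ n * db := mul_lt_mul_of_pos_right h1 hdb0
      _ = (D / δ) * db := by rw [hlamn]
      _ ≤ (D / δ) * δ := mul_le_mul_of_nonneg_left hdbδ (by positivity)
      _ = D := div_mul_cancel₀ D hδ0.ne'
  choose Wf pf hWk hpdom hWav using hplanes
  choose ff hforth hfmem hfspan using fun j => exists_frame (Wf j) (hWk j)
  -- compactness
  set U : ℕ → Euc n × (Fin k → Euc n) := fun j => (pf j, ff j) with hU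
  set S : Set (Euc n × (Fin k → Euc n)) :=
    closure (ZSpan.fundamentalDomain bB) ×ˢ Set.pi Set.univ (fun _ => Metric.closedBall 0 1)
    with hS
  have hScomp : IsCompact S := by
    apply IsCompact.prod
    · exact (ZSpan.fundamentalDomain_isBounded bB).isCompact_closure
    · exact isCompact_univ_pi fun _ => isCompact_closedBall _ _
  have hUS : ∀ j, U j ∈ S := by
    intro j
    refine ⟨subset_closure (hpdom j), fun i _ => ?_⟩
    rw [Metric.mem_closedBall, dist_zero_right]
    rw [(hforth j).1 i]
  obtain ⟨⟨p, f⟩, hpfS, φ, hφmono, hφtend⟩ := hScomp.tendsto_subseq hUS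
  have hptend : Filter.Tendsto (fun m => pf (φ m)) Filter.atTop (nhds p) :=
    (continuous_fst.tendsto _).comp hφtend
  have hftend : ∀ i, Filter.Tendsto (fun m => ff (φ m) i) Filter.atTop (nhds (f i)) := by
    intro i
    exact ((continuous_apply i).tendsto _).comp ((continuous_snd.tendsto _).comp hφtend)
  have hforthf : Orthonormal ℝ f := by
    rw [orthonormal_iff_ite]
    intro i i'
    have h1 : Filter.Tendsto (fun m => (inner ℝ (ff (φ m) i) (ff (φ m) i') : ℝ))
        Filter.atTop (nhds (inner ℝ (f i) (f i'))) :=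
      (continuous_inner.tendsto _).comp ((hftend i).prodMk_nhds (hftend i'))
    have h2 : (fun m => (inner ℝ (ff (φ m) i) (ff (φ m) i') : ℝ))
        = fun _ => if i = i' then (1 : ℝ) else 0 :=
      funext fun m => orthonormal_iff_ite.1 (hforth (φ m)) i i'
    rw [h2] at h1
    exact tendsto_nhds_unique h1 tendsto_const_nhds
  set W : Submodule ℝ (Euc n) := Submodule.span ℝ (Set.range f) with hW
  have hWfin : Module.finrank ℝ W = k := by
    rw [hW, finrank_span_eq_card hforthf.linearIndependent]
    simp
  refine ⟨W, p + c • z0 + z0, hWfin, ?_⟩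
  -- final disjointness
  rw [Set.disjoint_left]
  rintro z hzint hzU
  rw [Set.mem_iUnion₂] at hzU
  obtain ⟨x, hx, hzx⟩ := hzU
  -- move to K' picture
  rw [vadd_set_add, interior_vadd] at hzint
  obtain ⟨ζ, hζ, hzζ⟩ := hzint
  have hzζ : p + c • z0 + z0 + ζ = z := hzζ
  set y : Euc n := p + c • z0 + ζ with hy
  have hyint : y ∈ interior ((p +ᵥ (W : Set (Euc n))) + c • (-K')) := by
    have hsetid : (p +ᵥ (W : Set (Euc n))) + c • (-K')
        = (p + c • z0) +ᵥ ((W : Set (Euc n)) + c • (-K)) := by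
      rw [hK'def, neg_vadd_neg, smul_vadd_set, add_vadd_set_right, vadd_set_add, vadd_vadd,
        add_comm (c • z0) p]
    rw [hsetid, interior_vadd]
    exact ⟨ζ, hζ, rfl⟩
  have hyK : y ∈ x +ᵥ K' := by
    rw [mem_vadd_set', hK'def, mem_vadd_set']
    have h1 : y - x - -z0 = z - x := by rw [hy, ← hzζ]; abel
    rw [h1]
    rw [mem_vadd_set'] at hzx
    exact hzx
  -- now derive contradiction
  set C : Set (Euc n) := (W : Set (Euc n)) + (-K') with hC
  have hCconv : Convex ℝ C := (W.convex).add hK'.1.neg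
  have hrwC : (p +ᵥ (W : Set (Euc n))) + c • (-K') = p +ᵥ (c • C) := by
    rw [vadd_set_add]
    congr 1
    rw [hC, smul_set_add', smul_coe_submodule hc0.ne' W]
  rw [hrwC, interior_vadd, interior_smul₀ hc0.ne'] at hyint
  rw [mem_vadd_set'] at hyint
  obtain ⟨q₀, hq₀, hq₀e⟩ := hyint
  have hq₀e : c • q₀ = y - p := hq₀e
  obtain ⟨s, hs0, hsc, hsmem⟩ := mem_shrink hq₀ hc0
  rw [hq₀e] at hsmem
  rw [hC, smul_set_add', smul_coe_submodule hs0.ne' W] at hsmem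
  obtain ⟨w, hw, e, he, hsum⟩ := hsmem
  obtain ⟨m0, hm0, hm0e⟩ := he
  have hmK : -m0 ∈ K' := by rwa [Set.mem_neg] at hm0
  set a : Euc n := p + w with ha
  rw [mem_vadd_set'] at hyK
  have haK : a - x ∈ (1 + s) • K' := by
    rw [Convex.add_smul hK'.1 zero_le_one hs0.le]
    refine ⟨y - x, ⟨y - x, hyK, one_smul ℝ _⟩, s • (-m0), ⟨-m0, hmK, rfl⟩, ?_⟩
    show (y - x) + (s • (-m0)) = a - x
    have h1 : w + e = y - p := hsum
    have h2 : s • m0 = e := hm0e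
    have h3 : y = p + (w + e) := by rw [h1]; abel
    rw [smul_neg, h2, ha, h3]
    abel
  set t' : ℝ := 1 + s with ht'
  have ht'0 : 0 < t' := by rw [ht']; linarith
  have ht'lam : t' < lam := by
    have h1 : t' = 1 + s := ht'
    have h2 : c = lam - 1 := hc
    linarith
  -- approximate a by points on the planes
  have hwW : w ∈ W := hw
  rw [hW] at hwW
  obtain ⟨d, hd⟩ := (Submodule.mem_span_range_iff_exists_fun ℝ).1 hwW
  set aseq : ℕ → Euc n := fun m' => pf (φ m') + ∑ i, d i • ff (φ m') i with haseq
  have hatend : Filter.Tendsto aseq Filter.atTop (nhds a) := by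
    have h1 : Filter.Tendsto (fun m' => ∑ i, d i • ff (φ m') i) Filter.atTop
        (nhds (∑ i, d i • f i)) := by
      apply tendsto_finset_sum
      intro i _
      exact (hftend i).const_smul (d i)
    rw [hd] at h1
    have := hptend.add h1
    rw [ha]
    exact this
  set τ : ℝ := (t' + lam) / 2 with hτ
  have hτ1 : t' < τ := by rw [hτ]; linarith
  have hτ2 : τ < lam := by rw [hτ]; linarith
  have hτ0 : 0 < τ := lt_trans ht'0 hτ1
  have hev1 : ∀ᶠ m' in Filter.atTop, τ ≤ t (φ m') := by
    have h1 : Filter.Tendsto (fun m' => t (φ m')) Filter.atTop (nhds lam) :=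
      httend.comp hφmono.tendsto_atTop
    exact h1.eventually (eventually_ge_nhds hτ2)
  have hev2 : ∀ᶠ m' in Filter.atTop, ‖aseq m' - a‖ < (τ - t') * ρ := by
    have h1 : ∀ᶠ m' in Filter.atTop, aseq m' ∈ Metric.ball a ((τ - t') * ρ) :=
      hatend.eventually (Metric.ball_mem_nhds a (mul_pos (by linarith : (0:ℝ) < τ - t') hρ0))
    filter_upwards [h1] with m' hm'
    rwa [Metric.mem_ball, dist_eq_norm] at hm'
  obtain ⟨M, hM1, hM2⟩ := (hev1.and hev2).exists
  -- the contradiction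
  have hmem : aseq M ∈ ((pf (φ M) +ᵥ ((Wf (φ M)) : Set (Euc n))) ∩ (x +ᵥ t (φ M) • K')) := by
    constructor
    · refine ⟨∑ i, d i • ff (φ M) i, ?_, rfl⟩
      exact Submodule.sum_mem _ fun i _ => Submodule.smul_mem _ _ (hfmem (φ M) i)
    · rw [mem_vadd_set']
      have hsplit : aseq M - x = (a - x) + (aseq M - a) := by abel
      have hmem2 : aseq M - a ∈ (τ - t') • K' := by
        refine ⟨(τ - t')⁻¹ • (aseq M - a), ?_, ?_⟩
        · apply hρK
          rw [Metric.mem_ball, dist_zero_right, norm_smul, Real.norm_eq_abs,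
            abs_of_pos (inv_pos.2 (by linarith : (0:ℝ) < τ - t'))]
          rw [inv_mul_lt_iff₀ (by linarith : (0:ℝ) < τ - t')]
          calc ‖aseq M - a‖ < (τ - t') * ρ := hM2
            _ = (τ - t') * ρ := rfl
        · show (τ - t') • (τ - t')⁻¹ • (aseq M - a) = aseq M - a
          rw [smul_smul, mul_inv_cancel₀ (by linarith : (τ - t') ≠ 0), one_smul]
      have hmem3 : aseq M - x ∈ τ • K' := by
        have hτsplit : τ • K' = t' • K' + (τ - t') • K' := by
          have : τ = t' + (τ - t') := by ring
          rw [this, Convex.add_smul hK'.1 ht'0.le (by linarith : (0:ℝ) ≤ τ - t')]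
          congr 1
          ring
        rw [hτsplit, hsplit]
        exact ⟨a - x, haK, aseq M - a, hmem2, rfl⟩
      exact smul_subset_smul_of_zero_mem hK'.1 h0K hτ0 (hM1) hmem3
  rw [hWav (φ M) x hx] at hmem
  exact hmem
end
end
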